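/- arXiv:2405.15416 — 4 statements merged into one kernel-verified Lean document; each statement's English description precedes it below -/
import Mathlib

section
/- Every odd prism is cycle-extendable; that is, for every k ≥ 1, the graph obtained from two disjoint odd cycles w_0 w_1 … w_{2k} and z_0 z_1 … z_{2k} by adding the edges w_i z_i for all i ∈ {0, 1, …, 2k} is a matching covered graph in which every even cycle is conformal. -/
open SimpleGraph

variable {V : Type*}

/-- A matching covered graph: a connected graph with at least two vertices in which
every edge belongs to some perfect matching. -/
def MatchingCovered (G : SimpleGraph V) : Prop :=
  G.Connected ∧ Nontrivial V ∧
    ∀ e ∈ G.edgeSet, ∃ M : G.Subgraph, M.IsPerfectMatching ∧ e ∈ M.edgeSet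

/-- A cycle `C` is conformal if `G - V(C)` has a perfect matching. -/
def ConformalCycle (G : SimpleGraph V) {u : V} (C : G.Walk u u) : Prop :=
  ∃ M : G.Subgraph, M.IsMatching ∧ M.verts = {w | w ∉ C.support}

/-- A matching covered graph is cycle-extendable if each of its even cycles is conformal. -/
def CycleExtendable (G : SimpleGraph V) : Prop :=
  ∀ ⦃u : V⦄ (C : G.Walk u u), C.IsCycle → Even C.length → ConformalCycle G C
/-- The odd wheel `W_{2k+1}`: an odd cycle `u_0 u_1 … u_{2k}` (the rim, with vertices
`some i`) together with a hub (the vertex `none`) joined to every rim vertex. -/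
def oddWheel (k : ℕ) : SimpleGraph (Option (ZMod (2 * k + 1))) where
  Adj a b :=
    (a = none ∧ b ≠ none) ∨ (b = none ∧ a ≠ none) ∨
    (∃ i j : ZMod (2 * k + 1), a = some i ∧ b = some j ∧ i ≠ j ∧ (i - j = 1 ∨ j - i = 1))
  symm := by
    constructor
    rintro a b (⟨h1, h2⟩ | ⟨h1, h2⟩ | ⟨i, j, h1, h2, h3, h4⟩)
    · exact Or.inr (Or.inl ⟨h1, h2⟩)
    · exact Or.inl ⟨h1, h2⟩
    · exact Or.inr (Or.inr ⟨j, i, h2, h1, h3.symm, h4.symm⟩)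
  loopless := by
    constructor
    rintro a (⟨h1, h2⟩ | ⟨h1, h2⟩ | ⟨i, j, h1, h2, h3, h4⟩)
    · exact h2 h1
    · exact h2 h1
    · rw [h1] at h2; exact h3 (Option.some_injective _ h2.symm).symm

/-- The odd prism: two disjoint odd cycles `w_0 w_1 … w_{2k}` (vertices `(false, i)`) and
`z_0 z_1 … z_{2k}` (vertices `(true, i)`) together with the rungs `w_i z_i`. -/
def oddPrism (k : ℕ) : SimpleGraph (Bool × ZMod (2 * k + 1)) where
  Adj a b :=
    (a.1 = b.1 ∧ a.2 ≠ b.2 ∧ (a.2 - b.2 = 1 ∨ b.2 - a.2 = 1)) ∨ (a.1 ≠ b.1 ∧ a.2 = b.2)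
  symm := by
    constructor
    rintro a b (⟨h1, h2, h3⟩ | ⟨h1, h2⟩)
    · exact Or.inl ⟨h1.symm, h2.symm, h3.symm⟩
    · exact Or.inr ⟨h1.symm, h2.symm⟩
  loopless := by
    constructor
    rintro a (⟨h1, h2, h3⟩ | ⟨h1, h2⟩)
    · exact h2 rfl
    · exact h1 rfl

namespace OddPrismAux

variable {k : ℕ}

lemma one_ne (hk : 1 ≤ k) : (1 : ZMod (2 * k + 1)) ≠ 0 := by
  intro h
  have h2 : ((1 : ℕ) : ZMod (2 * k + 1)) = 0 := by exact_mod_cast h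
  have := (ZMod.natCast_eq_zero_iff 1 (2 * k + 1)).mp h2
  have := Nat.le_of_dvd one_pos this
  omega

lemma two_ne (hk : 1 ≤ k) : (2 : ZMod (2 * k + 1)) ≠ 0 := by
  intro h
  have h2 : ((2 : ℕ) : ZMod (2 * k + 1)) = 0 := by exact_mod_cast h
  have := (ZMod.natCast_eq_zero_iff 2 (2 * k + 1)).mp h2
  have := Nat.le_of_dvd two_pos this
  omega

/-- The edge of the prism joining `(b,j)` and `(b,j+1)`. -/
def gapEdge (k : ℕ) (b : Bool) (j : ZMod (2 * k + 1)) : Sym2 (Bool × ZMod (2 * k + 1)) :=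
  s((b, j), (b, j + 1))

/-- Indicator (mod 2) that a dart crosses the gap between columns `j` and `j+1`. -/
def cross (k : ℕ) (j : ZMod (2 * k + 1)) (d : (oddPrism k).Dart) : ZMod 2 :=
  if (d.toProd.1.2 = j ∧ d.toProd.2.2 = j + 1) ∨ (d.toProd.1.2 = j + 1 ∧ d.toProd.2.2 = j)
  then 1 else 0

/-- Indicator (mod 2) that a dart crosses the gap `j` on side `b`. -/
def crossB (k : ℕ) (b : Bool) (j : ZMod (2 * k + 1)) (d : (oddPrism k).Dart) : ZMod 2 :=
  if d.toProd.1.1 = b ∧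
      ((d.toProd.1.2 = j ∧ d.toProd.2.2 = j + 1) ∨ (d.toProd.1.2 = j + 1 ∧ d.toProd.2.2 = j))
  then 1 else 0

lemma add_add_cancel (a b c : ZMod 2) : (a + b) + (b + c) = a + c := by
  have : b + b = 0 := CharTwo.add_self_eq_zero b
  linear_combination this

/-- Telescoping sums over walks, with values in `ZMod 2`. -/
lemma tele {V : Type*} {G : SimpleGraph V} (q : V → ZMod 2) :
    ∀ {u v : V} (W : G.Walk u v),
      (W.darts.map (fun d => q d.toProd.1 + q d.toProd.2)).sum = q u + q v := by
  intro u v W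
  induction W with
  | nil => simp [CharTwo.add_self_eq_zero]
  | cons h p ih =>
    simp only [SimpleGraph.Walk.darts_cons, List.map_cons, List.sum_cons, ih]
    exact add_add_cancel _ _ _

lemma crossStep (hk : 1 ≤ k) (j : ZMod (2 * k + 1)) (d : (oddPrism k).Dart) :
    cross k j d + cross k (j + 1) d =
      (if d.toProd.1.2 = j + 1 then (1 : ZMod 2) else 0) +
      (if d.toProd.2.2 = j + 1 then (1 : ZMod 2) else 0) := by
  obtain ⟨⟨⟨b1, i⟩, ⟨b2, m⟩⟩, hadj⟩ := d
  simp only [cross]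
  rcases hadj with ⟨hs, hne, hd⟩ | ⟨hb, he⟩
  · simp only at hne hd ⊢
    have hd' : i = m + 1 ∨ m = i + 1 := by
      rcases hd with h | h
      · left; linear_combination h
      · right; linear_combination h
    rcases hd' with h | h
    · subst h
      have e1 : ((m + 1 = j ∧ m = j + 1) ∨ (m + 1 = j + 1 ∧ m = j)) ↔ m = j := by
        constructor
        · rintro (⟨h1, h2⟩ | ⟨h1, h2⟩)
          · exact absurd (by linear_combination h1 - h2) (two_ne hk)
          · exact h2
        · intro h; right; exact ⟨by rw [h], h⟩
      have e2 : ((m + 1 = j + 1 ∧ m = j + 1 + 1) ∨ (m + 1 = j + 1 + 1 ∧ m = j + 1)) ↔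
          m = j + 1 := by
        constructor
        · rintro (⟨h1, h2⟩ | ⟨h1, h2⟩)
          · exact absurd (by linear_combination h1 - h2) (two_ne hk)
          · exact h2
        · intro h; right; exact ⟨by rw [h], h⟩
      have e3 : (m + 1 = j + 1) ↔ m = j := by constructor <;> intro h <;> linear_combination h
      rw [if_congr e1 rfl rfl, if_congr e2 rfl rfl, if_congr e3 rfl rfl]
    · subst h
      have e1 : ((i = j ∧ i + 1 = j + 1) ∨ (i = j + 1 ∧ i + 1 = j)) ↔ i = j := by
        constructor
        · rintro (⟨h1, h2⟩ | ⟨h1, h2⟩)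
          · exact h1
          · exact absurd (by linear_combination h2 - h1) (two_ne hk)
        · intro h; left; exact ⟨h, by rw [h]⟩
      have e2 : ((i = j + 1 ∧ i + 1 = j + 1 + 1) ∨ (i = j + 1 + 1 ∧ i + 1 = j + 1)) ↔
          i = j + 1 := by
        constructor
        · rintro (⟨h1, h2⟩ | ⟨h1, h2⟩)
          · exact h1
          · exact absurd (by linear_combination h2 - h1) (two_ne hk)
        · intro h; left; exact ⟨h, by rw [h]⟩
      have e3 : (i + 1 = j + 1) ↔ i = j := by constructor <;> intro h <;> linear_combination h
      rw [if_congr e1 rfl rfl, if_congr e2 rfl rfl, if_congr e3 rfl rfl]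
      exact add_comm _ _
  · simp only at he ⊢
    subst he
    rw [if_neg, if_neg]
    · split_ifs <;> decide
    · rintro (⟨h1, h2⟩ | ⟨h1, h2⟩)
      · exact absurd (by linear_combination h1 - h2) (one_ne hk)
      · exact absurd (by linear_combination h2 - h1) (one_ne hk)
    · rintro (⟨h1, h2⟩ | ⟨h1, h2⟩)
      · exact absurd (by linear_combination h1 - h2) (one_ne hk)
      · exact absurd (by linear_combination h2 - h1) (one_ne hk)

lemma cross_split (j : ZMod (2 * k + 1)) (d : (oddPrism k).Dart) :
    cross k j d = crossB k false j d + crossB k true j d := by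
  obtain ⟨⟨⟨b1, i⟩, ⟨b2, m⟩⟩, hadj⟩ := d
  rcases b1 <;> simp [cross, crossB]

lemma crossB_eq (hk : 1 ≤ k) (b : Bool) (j : ZMod (2 * k + 1)) (d : (oddPrism k).Dart) :
    crossB k b j d = if d.edge = gapEdge k b j then 1 else 0 := by
  obtain ⟨⟨⟨b1, i⟩, ⟨b2, m⟩⟩, hadj⟩ := d
  have hedge : (SimpleGraph.Dart.mk ((b1, i), (b2, m)) hadj).edge = s((b1, i), (b2, m)) := rfl
  rw [crossB, hedge, gapEdge]
  refine if_congr ?_ rfl rfl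
  constructor
  · rintro ⟨hb, hcross⟩
    simp only at hb hcross
    have hside : b2 = b1 := by
      rcases hadj with ⟨hs, _, _⟩ | ⟨_, he⟩
      · exact hs.symm
      · exfalso
        simp only at he
        rcases hcross with ⟨h1, h2⟩ | ⟨h1, h2⟩
        · exact absurd (by linear_combination h1 - h2 - he) (one_ne hk)
        · exact absurd (by linear_combination h2 + he - h1) (one_ne hk)
    subst hside
    subst hb
    rcases hcross with ⟨h1, h2⟩ | ⟨h1, h2⟩
    · subst h1; subst h2; rfl
    · subst h1; subst h2; exact Sym2.eq_swap
  · intro h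
    rw [Sym2.eq_iff] at h
    rcases h with ⟨h1, h2⟩ | ⟨h1, h2⟩ <;> rw [Prod.ext_iff] at h1 h2
    · exact ⟨h1.1, Or.inl ⟨h1.2, h2.2⟩⟩
    · exact ⟨h1.1, Or.inr ⟨h1.2, h2.2⟩⟩

lemma sum_cross (hk : 1 ≤ k) (d : (oddPrism k).Dart) :
    (∑ j : ZMod (2 * k + 1), cross k j d) =
      if d.toProd.1.1 = d.toProd.2.1 then 1 else 0 := by
  obtain ⟨⟨⟨b1, i⟩, ⟨b2, m⟩⟩, hadj⟩ := d
  simp only [cross]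
  rcases hadj with ⟨hs, hne, hd⟩ | ⟨hb, he⟩
  · simp only at hs hne hd ⊢
    rw [if_pos hs]
    have hd' : i = m + 1 ∨ m = i + 1 := by
      rcases hd with h | h
      · left; linear_combination h
      · right; linear_combination h
    rcases hd' with h | h
    · subst h
      have e1 : ∀ j : ZMod (2 * k + 1),
          (((m + 1 = j ∧ m = j + 1) ∨ (m + 1 = j + 1 ∧ m = j)) ↔ m = j) := by
        intro j
        constructor
        · rintro (⟨h1, h2⟩ | ⟨h1, h2⟩)
          · exact absurd (by linear_combination h1 - h2) (two_ne hk)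
          · exact h2
        · intro h; right; exact ⟨by rw [h], h⟩
      calc (∑ j : ZMod (2 * k + 1),
            if (m + 1 = j ∧ m = j + 1) ∨ (m + 1 = j + 1 ∧ m = j) then (1 : ZMod 2) else 0)
          = ∑ j : ZMod (2 * k + 1), if m = j then (1 : ZMod 2) else 0 := by
            exact Finset.sum_congr rfl fun j _ => if_congr (e1 j) rfl rfl
        _ = 1 := by rw [Finset.sum_ite_eq]; simp
    · subst h
      have e1 : ∀ j : ZMod (2 * k + 1),
          (((i = j ∧ i + 1 = j + 1) ∨ (i = j + 1 ∧ i + 1 = j)) ↔ i = j) := by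
        intro j
        constructor
        · rintro (⟨h1, h2⟩ | ⟨h1, h2⟩)
          · exact h1
          · exact absurd (by linear_combination h2 - h1) (two_ne hk)
        · intro h; left; exact ⟨h, by rw [h]⟩
      calc (∑ j : ZMod (2 * k + 1),
            if (i = j ∧ i + 1 = j + 1) ∨ (i = j + 1 ∧ i + 1 = j) then (1 : ZMod 2) else 0)
          = ∑ j : ZMod (2 * k + 1), if i = j then (1 : ZMod 2) else 0 := by
            exact Finset.sum_congr rfl fun j _ => if_congr (e1 j) rfl rfl
        _ = 1 := by rw [Finset.sum_ite_eq]; simp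
  · simp only at hb he ⊢
    subst he
    rw [if_neg hb]
    refine Finset.sum_eq_zero fun j _ => ?_
    rw [if_neg]
    rintro (⟨h1, h2⟩ | ⟨h1, h2⟩)
    · exact absurd (by linear_combination h1 - h2) (one_ne hk)
    · exact absurd (by linear_combination h2 - h1) (one_ne hk)

lemma sum_map_add {α : Type*} (f g : α → ZMod 2) :
    ∀ l : List α, (l.map fun x => f x + g x).sum = (l.map f).sum + (l.map g).sum := by
  intro l
  induction l with
  | nil => simp
  | cons a t ih => simp [ih]; ring

lemma sum_indicator {α β : Type*} [DecidableEq β] (F : α → β) (e : β) :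
    ∀ l : List α, (l.map F).Nodup →
      (l.map fun a => if F a = e then (1 : ZMod 2) else 0).sum =
        if e ∈ l.map F then 1 else 0 := by
  intro l
  induction l with
  | nil => simp
  | cons a t ih =>
    intro hn
    rw [List.map_cons, List.nodup_cons] at hn
    obtain ⟨ha, ht⟩ := hn
    rw [List.map_cons, List.sum_cons, List.map_cons, ih ht]
    by_cases h : F a = e
    · rw [if_pos h, if_neg (h ▸ ha), add_zero, if_pos (by simp [h])]
    · rw [if_neg h, zero_add]
      refine (if_congr ?_ rfl rfl)
      rw [List.mem_cons]
      exact ⟨Or.inr, fun hm => hm.resolve_left fun hm' => h hm'.symm⟩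

lemma interchange {α β : Type*} [Fintype β] (f : β → α → ZMod 2) :
    ∀ l : List α, (∑ j : β, (l.map (f j)).sum) = (l.map fun d => ∑ j : β, f j d).sum := by
  intro l
  induction l with
  | nil => simp
  | cons a t ih => simp [Finset.sum_add_distrib, ih]

section Balance

variable {k : ℕ} {u : Bool × ZMod (2 * k + 1)} {C : (oddPrism k).Walk u u}

lemma S_zero (hk : 1 ≤ k) (hC : C.IsCycle) (hE : Even C.length) (j : ZMod (2 * k + 1)) :
    (C.darts.map (cross k j)).sum = 0 := by
  set S : ZMod (2 * k + 1) → ZMod 2 := fun j => (C.darts.map (cross k j)).sum with hS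
  have step1 : ∀ j, S (j + 1) = S j := by
    intro j
    have h0 : S j + S (j + 1) = 0 := by
      rw [hS]
      simp only
      rw [← sum_map_add]
      have : (fun d => cross k j d + cross k (j + 1) d) =
          fun d : (oddPrism k).Dart =>
            (if d.toProd.1.2 = j + 1 then (1 : ZMod 2) else 0) +
            (if d.toProd.2.2 = j + 1 then (1 : ZMod 2) else 0) :=
        funext (crossStep hk j)
      rw [this, tele (fun x => if x.2 = j + 1 then (1 : ZMod 2) else 0) C]
      exact CharTwo.add_self_eq_zero _
    linear_combination h0 - CharTwo.add_self_eq_zero (S j)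
  have hconst : ∀ j, S j = S 0 := by
    have hn : ∀ n : ℕ, S ((n : ZMod (2 * k + 1))) = S 0 := by
      intro n
      induction n with
      | zero => norm_num
      | succ n ih => push_cast; rw [step1, ih]
    intro j
    rw [← ZMod.natCast_zmod_val j]
    exact hn _
  have htot : (∑ j : ZMod (2 * k + 1), S j) = 0 := by
    have h1 : (∑ j : ZMod (2 * k + 1), S j) =
        (C.darts.map fun d => ∑ j : ZMod (2 * k + 1), cross k j d).sum :=
      interchange _ _
    have h2 : (C.darts.map fun d => ∑ j : ZMod (2 * k + 1), cross k j d) =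
        C.darts.map fun d =>
          1 + ((if d.toProd.1.1 = true then (1 : ZMod 2) else 0) +
               (if d.toProd.2.1 = true then (1 : ZMod 2) else 0)) := by
      refine List.map_congr_left fun d _ => ?_
      rw [sum_cross hk d]
      obtain ⟨⟨⟨b1, i⟩, ⟨b2, m⟩⟩, hadj⟩ := d
      cases b1 <;> cases b2 <;> simp <;> decide
    rw [h1, h2, sum_map_add (fun _ : (oddPrism k).Dart => (1 : ZMod 2))
      (fun d : (oddPrism k).Dart => (if d.toProd.1.1 = true then (1 : ZMod 2) else 0) +
                (if d.toProd.2.1 = true then (1 : ZMod 2) else 0)),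
      tele (fun x => if x.1 = true then (1 : ZMod 2) else 0) C,
      CharTwo.add_self_eq_zero, add_zero]
    have h3 : (C.darts.map fun _ => (1 : ZMod 2)).sum = (C.length : ZMod 2) := by
      rw [← SimpleGraph.Walk.length_darts]
      induction C.darts with
      | nil => simp
      | cons a t ih => simp [ih]; ring
    rw [h3]
    have : (2 : ℕ) ∣ C.length := hE.two_dvd
    rw [show ((C.length : ℕ) : ZMod 2) = 0 from (ZMod.natCast_eq_zero_iff _ _).mpr this]
  have hcard : (∑ j : ZMod (2 * k + 1), S j) = S 0 := by
    rw [Finset.sum_congr rfl fun j _ => hconst j, Finset.sum_const, Finset.card_univ,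
      ZMod.card, nsmul_eq_mul]
    have : ((2 * k + 1 : ℕ) : ZMod 2) = 1 := by
      push_cast
      rw [show ((2 : ZMod 2)) = 0 by decide]
      ring
    rw [this, one_mul]
  have h0 : S 0 = 0 := by rw [← hcard, htot]
  exact (hconst j).trans h0

lemma gap_balance (hk : 1 ≤ k) (hC : C.IsCycle) (hE : Even C.length)
    (b : Bool) (j : ZMod (2 * k + 1)) :
    gapEdge k b j ∈ C.edges ↔ gapEdge k (!b) j ∈ C.edges := by
  have key : ∀ j : ZMod (2 * k + 1),
      ((if gapEdge k false j ∈ C.edges then (1 : ZMod 2) else 0) +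
       (if gapEdge k true j ∈ C.edges then (1 : ZMod 2) else 0)) = 0 := by
    intro j
    have hsplit : (C.darts.map (cross k j)).sum =
        (C.darts.map (crossB k false j)).sum + (C.darts.map (crossB k true j)).sum := by
      rw [← sum_map_add]
      exact congrArg List.sum (List.map_congr_left fun d _ => cross_split j d)
    have hnodup : (C.darts.map SimpleGraph.Dart.edge).Nodup := hC.isCircuit.isTrail.edges_nodup
    have hb : ∀ b : Bool, (C.darts.map (crossB k b j)).sum =
        if gapEdge k b j ∈ C.edges then (1 : ZMod 2) else 0 := by
      intro b
      have : C.darts.map (crossB k b j) =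
          C.darts.map fun d => if d.edge = gapEdge k b j then (1 : ZMod 2) else 0 :=
        List.map_congr_left fun d _ => crossB_eq hk b j d
      rw [this, sum_indicator SimpleGraph.Dart.edge (gapEdge k b j) C.darts hnodup]
      rfl
    rw [← hb false, ← hb true, ← hsplit]
    exact S_zero hk hC hE j
  have h := key j
  cases b <;> simp only [Bool.not_false, Bool.not_true] <;>
    · constructor <;> intro hmem <;> by_contra hno <;> rw [if_pos hmem, if_neg hno] at h <;>
        first
        | exact absurd h (by decide)
        | (rw [if_neg hno, if_pos hmem] at h; exact absurd h (by decide))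
  
end Balance

section Support

variable {k : ℕ} {u : Bool × ZMod (2 * k + 1)} {C : (oddPrism k).Walk u u}

lemma bool_ne_iff {x y : Bool} (h : x ≠ y) : x = !y := by
  cases x <;> cases y <;> simp_all

lemma exists_dart_fst (hC : C.IsCycle) {x : Bool × ZMod (2 * k + 1)} (hx : x ∈ C.support) :
    ∃ d ∈ C.darts, d.toProd.1 = x := by
  have h := SimpleGraph.Walk.map_fst_darts_append C
  rw [← h] at hx
  rcases List.mem_append.mp hx with hx' | hx'
  · obtain ⟨d, hd, hd'⟩ := List.mem_map.mp hx'
    exact ⟨d, hd, hd'⟩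
  · -- x = u; the first dart starts at u
    have hxu : x = u := by simpa using hx'
    subst hxu
    cases C with
    | nil => exact absurd rfl hC.ne_nil
    | cons h' p =>
      refine ⟨_, by rw [SimpleGraph.Walk.darts_cons]; exact List.mem_cons_self, rfl⟩

lemma support_balance (hk : 1 ≤ k) (hC : C.IsCycle) (hE : Even C.length)
    (b : Bool) (c : ZMod (2 * k + 1)) (hmem : (b, c) ∈ C.support) :
    (!b, c) ∈ C.support := by
  obtain ⟨d, hd, hfst⟩ := exists_dart_fst hC hmem
  obtain ⟨⟨⟨b1, i⟩, ⟨b2, m⟩⟩, hadj'⟩ := d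
  injection hfst with h1 h2
  rw [← h1, ← h2]
  have hadj2 := hadj'
  rcases hadj2 with ⟨hs, hne, hd'⟩ | ⟨hb', he⟩
  · -- side dart
    simp only at hs hne hd'
    subst hs
    have hd'' : i = m + 1 ∨ m = i + 1 := by
      rcases hd' with h | h
      · left; linear_combination h
      · right; linear_combination h
    rcases hd'' with h | h
    · subst h
      have hedge : gapEdge k b1 m ∈ C.edges := by
        have he2 : (SimpleGraph.Dart.mk ((b1, m + 1), (b1, m)) hadj').edge = gapEdge k b1 m := by
          rw [gapEdge, SimpleGraph.Dart.edge]
          exact Sym2.eq_swap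
        rw [← he2]
        exact List.mem_map_of_mem hd
      have hedge' : gapEdge k (!b1) m ∈ C.edges := (gap_balance hk hC hE b1 m).mp hedge
      exact SimpleGraph.Walk.snd_mem_support_of_mem_edges C hedge'
    · subst h
      have hedge : gapEdge k b1 i ∈ C.edges := by
        have he2 : (SimpleGraph.Dart.mk ((b1, i), (b1, i + 1)) hadj').edge = gapEdge k b1 i := rfl
        rw [← he2]
        exact List.mem_map_of_mem hd
      have hedge' : gapEdge k (!b1) i ∈ C.edges := (gap_balance hk hC hE b1 i).mp hedge
      exact SimpleGraph.Walk.fst_mem_support_of_mem_edges C hedge'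
  · -- rung dart: the other endpoint is (!b1, i)
    simp only at hb' he
    have h2' : (b2, m) = (!b1, i) := by
      rw [Prod.mk.injEq]
      exact ⟨bool_ne_iff (Ne.symm hb'), he.symm⟩
    have hmem2 := SimpleGraph.Walk.dart_snd_mem_support_of_mem_darts C hd
    rw [show (SimpleGraph.Dart.mk ((b1, i), (b2, m)) hadj').snd = (b2, m) from rfl, h2'] at hmem2
    exact hmem2

lemma support_balance_iff (hk : 1 ≤ k) (hC : C.IsCycle) (hE : Even C.length)
    (b : Bool) (c : ZMod (2 * k + 1)) :
    (b, c) ∈ C.support ↔ (!b, c) ∈ C.support := by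
  constructor
  · exact support_balance hk hC hE b c
  · intro h
    have := support_balance hk hC hE (!b) c h
    rwa [Bool.not_not] at this

end Support

section Matchings

variable {k : ℕ}

/-- The perfect matching of all rungs. -/
def Mrungs (k : ℕ) : (oddPrism k).Subgraph where
  verts := Set.univ
  Adj a b := a.1 ≠ b.1 ∧ a.2 = b.2
  adj_sub h := Or.inr h
  edge_vert _ := Set.mem_univ _
  symm := ⟨fun a b h => ⟨Ne.symm h.1, h.2.symm⟩⟩

lemma Mrungs_isPerfectMatching : (Mrungs k).IsPerfectMatching := by
  constructor
  · intro v _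
    refine ⟨(!v.1, v.2), ⟨by simp [Mrungs], rfl⟩, ?_⟩
    rintro y ⟨hy1, hy2⟩
    have : y.1 = !v.1 := bool_ne_iff (Ne.symm hy1)
    exact Prod.ext this hy2.symm
  · intro v
    exact Set.mem_univ _

/-- The perfect matching using the two side edges over the gap `i` and rungs elsewhere. -/
def Mside (hk : 1 ≤ k) (i : ZMod (2 * k + 1)) : (oddPrism k).Subgraph where
  verts := Set.univ
  Adj a b := (a.2 = b.2 ∧ a.1 ≠ b.1 ∧ a.2 ≠ i ∧ a.2 ≠ i + 1) ∨
    (a.1 = b.1 ∧ ((a.2 = i ∧ b.2 = i + 1) ∨ (a.2 = i + 1 ∧ b.2 = i)))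
  adj_sub h := by
    rcases h with ⟨h1, h2, _, _⟩ | ⟨h1, h2⟩
    · exact Or.inr ⟨h2, h1⟩
    · refine Or.inl ⟨h1, ?_, ?_⟩
      · rcases h2 with ⟨ha, hb⟩ | ⟨ha, hb⟩
        · rw [ha, hb]; intro h; exact one_ne hk (by linear_combination -h)
        · rw [ha, hb]; intro h; exact one_ne hk (by linear_combination h)
      · rcases h2 with ⟨ha, hb⟩ | ⟨ha, hb⟩
        · right; rw [ha, hb]; ring
        · left; rw [ha, hb]; ring
  edge_vert _ := Set.mem_univ _
  symm := ⟨fun a b h => by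
    rcases h with ⟨h1, h2, h3, h4⟩ | ⟨h1, h2⟩
    · exact Or.inl ⟨h1.symm, Ne.symm h2, h1 ▸ h3, h1 ▸ h4⟩
    · refine Or.inr ⟨h1.symm, ?_⟩
      rcases h2 with ⟨ha, hb⟩ | ⟨ha, hb⟩
      · exact Or.inr ⟨hb, ha⟩
      · exact Or.inl ⟨hb, ha⟩⟩

lemma Mside_isPerfectMatching (hk : 1 ≤ k) (i : ZMod (2 * k + 1)) :
    (Mside hk i).IsPerfectMatching := by
  have hne1 : i ≠ i + 1 := fun h => one_ne hk (by linear_combination -h)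
  constructor
  · intro v _
    by_cases h1 : v.2 = i
    · refine ⟨(v.1, i + 1), Or.inr ⟨rfl, Or.inl ⟨h1, rfl⟩⟩, ?_⟩
      rintro y (⟨hy1, hy2, hy3, hy4⟩ | ⟨hy1, ⟨hya, hyb⟩ | ⟨hya, hyb⟩⟩)
      · exact absurd h1 hy3
      · exact Prod.ext hy1.symm hyb
      · exact absurd (h1 ▸ hya : i = i + 1) hne1
    · by_cases h2 : v.2 = i + 1
      · refine ⟨(v.1, i), Or.inr ⟨rfl, Or.inr ⟨h2, rfl⟩⟩, ?_⟩
        rintro y (⟨hy1, hy2, hy3, hy4⟩ | ⟨hy1, ⟨hya, hyb⟩ | ⟨hya, hyb⟩⟩)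
        · exact absurd h2 hy4
        · exact absurd (hya ▸ h2 : i = i + 1) hne1
        · exact Prod.ext hy1.symm hyb
      · refine ⟨(!v.1, v.2), Or.inl ⟨rfl, by simp, h1, h2⟩, ?_⟩
        rintro y (⟨hy1, hy2, hy3, hy4⟩ | ⟨hy1, ⟨hya, hyb⟩ | ⟨hya, hyb⟩⟩)
        · exact Prod.ext (bool_ne_iff (Ne.symm hy2)) hy1.symm
        · exact absurd hya h1
        · exact absurd hya h2
  · intro v
    exact Set.mem_univ _

end Matchings

section Connect

variable {k : ℕ}

lemma reach_zero (hk : 1 ≤ k) (b : Bool) :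
    ∀ n : ℕ, (oddPrism k).Reachable (b, (n : ZMod (2 * k + 1))) (b, 0) := by
  intro n
  induction n with
  | zero => rw [Nat.cast_zero]
  | succ n ih =>
    have hadj : (oddPrism k).Adj (b, ((n + 1 : ℕ) : ZMod (2 * k + 1)))
        (b, (n : ZMod (2 * k + 1))) := by
      refine Or.inl ⟨rfl, ?_, ?_⟩
      · push_cast
        intro h
        exact one_ne hk (by linear_combination h)
      · left; push_cast; ring
    exact hadj.reachable.trans ih

lemma oddPrism_connected (hk : 1 ≤ k) : (oddPrism k).Connected := by
  rw [SimpleGraph.connected_iff]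
  refine ⟨?_, ⟨(false, 0)⟩⟩
  intro x y
  have hx : (oddPrism k).Reachable x (x.1, 0) := by
    have := reach_zero hk x.1 x.2.val
    rwa [ZMod.natCast_zmod_val, Prod.mk.eta] at this
  have hy : (oddPrism k).Reachable y (y.1, 0) := by
    have := reach_zero hk y.1 y.2.val
    rwa [ZMod.natCast_zmod_val, Prod.mk.eta] at this
  refine hx.trans (Reachable.trans ?_ hy.symm)
  by_cases h : x.1 = y.1
  · rw [h]
  · exact (SimpleGraph.Adj.reachable (Or.inr ⟨h, rfl⟩))

end Connect

end OddPrismAux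


open OddPrismAux in
theorem oddPrism_main (k : ℕ) (hk : 1 ≤ k) :
    ((oddPrism k).Connected ∧ Nontrivial (Bool × ZMod (2 * k + 1)) ∧
      ∀ e ∈ (oddPrism k).edgeSet, ∃ M : (oddPrism k).Subgraph,
        M.IsPerfectMatching ∧ e ∈ M.edgeSet) ∧
    (∀ ⦃u : Bool × ZMod (2 * k + 1)⦄ (C : (oddPrism k).Walk u u), C.IsCycle → Even C.length →
      ∃ M : (oddPrism k).Subgraph, M.IsMatching ∧ M.verts = {w | w ∉ C.support}) := by
  constructor
  · refine ⟨oddPrism_connected hk, ⟨(false, 0), (true, 0), by simp⟩, ?_⟩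
    intro e
    refine Sym2.ind (fun x y he => ?_) e
    rw [SimpleGraph.mem_edgeSet] at he
    rcases he with ⟨hs, hne, hd⟩ | ⟨hb, hcol⟩
    · rcases hd with h | h
      · refine ⟨Mside hk y.2, Mside_isPerfectMatching hk y.2, ?_⟩
        rw [SimpleGraph.Subgraph.mem_edgeSet]
        exact Or.inr ⟨hs, Or.inr ⟨by linear_combination h, rfl⟩⟩
      · refine ⟨Mside hk x.2, Mside_isPerfectMatching hk x.2, ?_⟩
        rw [SimpleGraph.Subgraph.mem_edgeSet]
        exact Or.inr ⟨hs, Or.inl ⟨rfl, by linear_combination h⟩⟩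
    · exact ⟨Mrungs k, Mrungs_isPerfectMatching,
        by rw [SimpleGraph.Subgraph.mem_edgeSet]; exact ⟨hb, hcol⟩⟩
  · intro u C hC hE
    refine ⟨{ verts := {w | w ∉ C.support},
              Adj := fun a b => a ∉ C.support ∧ b ∉ C.support ∧ a.1 ≠ b.1 ∧ a.2 = b.2,
              adj_sub := fun h => Or.inr ⟨h.2.2.1, h.2.2.2⟩,
              edge_vert := fun h => h.1,
              symm := ⟨fun a b h => ⟨h.2.1, h.1, Ne.symm h.2.2.1, h.2.2.2.symm⟩⟩ }, ?_, rfl⟩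
    intro v hv
    have hv' : v ∉ C.support := hv
    have hv2 : (!v.1, v.2) ∉ C.support := by
      intro hmem
      apply hv'
      have := support_balance hk hC hE (!v.1) v.2 hmem
      rw [Bool.not_not] at this
      rwa [Prod.mk.eta] at this
    refine ⟨(!v.1, v.2), ⟨hv', hv2, by simp, rfl⟩, ?_⟩
    rintro y ⟨hy1, hy2, hy3, hy4⟩
    exact Prod.ext (bool_ne_iff (Ne.symm hy3)) hy4.symm

/-- Every odd prism is cycle-extendable: for every `k ≥ 1`, the odd
prism over two odd cycles of length `2k+1` is a matching covered graph in which every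
even cycle is conformal. -/
theorem oddPrism_matchingCovered_and_cycleExtendable (k : ℕ) (hk : 1 ≤ k) :
    MatchingCovered (oddPrism k) ∧ CycleExtendable (oddPrism k) := by
  obtain ⟨h1, h2⟩ := oddPrism_main k hk
  exact ⟨h1, fun u C hC hE => h2 C hC hE⟩
end

section
/- Let G be a matching covered graph, let v_0 be a vertex of G of degree two having two distinct neighbors, and let K be a graph with maximum degree at most 3. If the bicontraction G/v_0 is K-based, then G is K-based. -/
open SimpleGraph

variable {V : Type*}

/-- `G` contains a subgraph which is a subdivision of `K` in which the path replacing
each edge has length satisfying `okLen`: there are internally disjoint paths in `G`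
joining the images of the branch vertices. -/
def HasSubdiv {W : Type*} (G : SimpleGraph V) (K : SimpleGraph W) (okLen : ℕ → Prop) : Prop :=
  ∃ (f : W ↪ V) (p : ∀ a b : W, K.Adj a b → G.Walk (f a) (f b)),
    (∀ a b hab, (p a b hab).IsPath) ∧
    (∀ a b hab, okLen (p a b hab).length) ∧
    (∀ a b hab (c : W), f c ∈ (p a b hab).support → c = a ∨ c = b) ∧
    (∀ a b hab a' b' hab', s(a, b) ≠ s(a', b') →
      ∀ w, w ∈ (p a b hab).support → w ∈ (p a' b' hab').support →
        (w = f a ∨ w = f b) ∧ (w = f a' ∨ w = f b'))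

/-- `G` is `K`-based: some subgraph of `G` is a bisubdivision of `K` (each edge of `K`
is replaced by an odd path, i.e. subdivided by an even number of vertices). -/
def IsBasedOn {W : Type*} (G : SimpleGraph V) (K : SimpleGraph W) : Prop :=
  HasSubdiv G K Odd

/-- `G` contains a subdivision of `K`. -/
def ContainsSubdivision {W : Type*} (G : SimpleGraph V) (K : SimpleGraph W) : Prop :=
  HasSubdiv G K fun _ => True

/-- Planarity, via Kuratowski's characterization: no subdivision of `K₅` nor of `K₃,₃`. -/
def IsPlanar (G : SimpleGraph V) : Prop :=
  ¬ ContainsSubdivision G (⊤ : SimpleGraph (Fin 5)) ∧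
  ¬ ContainsSubdivision G (completeBipartiteGraph (Fin 3) (Fin 3))

/-- `G` is `K₂,₃`-based: it contains a subgraph that is a bisubdivision of `K₂,₃`. -/
def K23Based (G : SimpleGraph V) : Prop :=
  IsBasedOn G (completeBipartiteGraph (Fin 2) (Fin 3))

/-- The set of original vertices represented by a vertex of the bicontraction `G/v₀`:
the contraction vertex (here `v₁`) represents `{v₀, v₁, v₂}` and every other vertex
represents itself. -/
def bicontractFiber [DecidableEq V] (v₀ v₁ v₂ : V) (x : ↥({v₀, v₂}ᶜ : Set V)) : Set V :=
  if (x : V) = v₁ then {v₀, v₁, v₂} else {(x : V)}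

/-- The bicontraction `G/v₀` of a vertex `v₀` of degree two with distinct neighbors
`v₁` and `v₂`: both edges `v₀v₁` and `v₀v₂` are contracted, i.e. `v₀, v₁, v₂` are
identified into a single vertex (represented by `v₁`). -/
def bicontract [DecidableEq V] (G : SimpleGraph V) (v₀ v₁ v₂ : V) :
    SimpleGraph ↥({v₀, v₂}ᶜ : Set V) where
  Adj x y := x ≠ y ∧ ∃ a ∈ bicontractFiber v₀ v₁ v₂ x, ∃ b ∈ bicontractFiber v₀ v₁ v₂ y,
    G.Adj a b
  symm := by
    constructor
    rintro x y ⟨hxy, a, ha, b, hb, hab⟩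
    exact ⟨hxy.symm, b, hb, a, ha, hab.symm⟩
  loopless := by constructor; rintro x ⟨hxx, -⟩; exact hxx rfl

set_option linter.unusedSectionVars false

section Helpers
variable [DecidableEq V] {G : SimpleGraph V} {v₀ v₁ v₂ : V}

lemma val_ne_v0 (x : ↥({v₀, v₂}ᶜ : Set V)) : (x : V) ≠ v₀ := by
  have h0 := x.2
  simp only [Set.mem_compl_iff, Set.mem_insert_iff, Set.mem_singleton_iff] at h0
  push_neg at h0; exact h0.1

lemma val_ne_v2 (x : ↥({v₀, v₂}ᶜ : Set V)) : (x : V) ≠ v₂ := by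
  have h0 := x.2
  simp only [Set.mem_compl_iff, Set.mem_insert_iff, Set.mem_singleton_iff] at h0
  push_neg at h0; exact h0.2

lemma adj_of_ne_ne {x y : ↥({v₀, v₂}ᶜ : Set V)}
    (hxy : (bicontract G v₀ v₁ v₂).Adj x y) (hx : (x : V) ≠ v₁) (hy : (y : V) ≠ v₁) :
    G.Adj (x : V) (y : V) := by
  obtain ⟨-, a, ha, b, hb, hab⟩ := hxy
  rw [bicontractFiber, if_neg hx, Set.mem_singleton_iff] at ha
  rw [bicontractFiber, if_neg hy, Set.mem_singleton_iff] at hb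
  rw [← ha, ← hb]; exact hab

lemma adj_of_vb (hnbr : G.neighborSet v₀ = {v₁, v₂}) {x y : ↥({v₀, v₂}ᶜ : Set V)}
    (hxy : (bicontract G v₀ v₁ v₂).Adj x y) (hx : (x : V) = v₁) (hy : (y : V) ≠ v₁) :
    G.Adj v₁ (y : V) ∨ G.Adj v₂ (y : V) := by
  obtain ⟨-, a, ha, b, hb, hab⟩ := hxy
  rw [bicontractFiber, if_pos hx] at ha
  rw [bicontractFiber, if_neg hy, Set.mem_singleton_iff] at hb
  subst hb
  rcases ha with h | h | h <;> rw [h] at hab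
  · exfalso
    have hmem : (y : V) ∈ G.neighborSet v₀ := hab
    rw [hnbr] at hmem
    rcases hmem with h' | h'
    · exact hy h'
    · exact val_ne_v2 y h'
  · exact Or.inl hab
  · exact Or.inr hab

lemma adj_v01 (hnbr : G.neighborSet v₀ = {v₁, v₂}) : G.Adj v₀ v₁ := by
  have : v₁ ∈ G.neighborSet v₀ := by rw [hnbr]; exact Set.mem_insert _ _
  exact this

lemma adj_v02 (hnbr : G.neighborSet v₀ = {v₁, v₂}) : G.Adj v₀ v₂ := by
  have : v₂ ∈ G.neighborSet v₀ := by rw [hnbr]; exact Set.mem_insert_of_mem _ rfl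
  exact this

end Helpers

section Lifts
variable [DecidableEq V] {G : SimpleGraph V} {v₀ v₁ v₂ : V}

lemma liftPure {x y : ↥({v₀, v₂}ᶜ : Set V)}
    (q : (bicontract G v₀ v₁ v₂).Walk x y) (hq : ∀ u ∈ q.support, (u : V) ≠ v₁) :
    ∃ L : G.Walk (x : V) (y : V), L.length = q.length ∧
      L.support = q.support.map Subtype.val ∧ (q.IsPath → L.IsPath) := by
  induction q with
  | nil => exact ⟨.nil, by simp, by simp, fun _ => Walk.IsPath.nil⟩
  | @cons x m y h q ih =>
    obtain ⟨L, hlen, hsup, hpath⟩ := ih (fun u hu => hq u (by simp [hu]))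
    have hx : (x : V) ≠ v₁ := hq x (by simp)
    have hm : (m : V) ≠ v₁ := hq m (by simp)
    refine ⟨.cons (adj_of_ne_ne h hx hm) L, by simp [hlen], by simp [hsup], ?_⟩
    intro hp
    rw [Walk.cons_isPath_iff] at hp ⊢
    refine ⟨hpath hp.1, ?_⟩
    rw [hsup]
    intro hmem
    obtain ⟨u, hu, hval⟩ := List.mem_map.1 hmem
    exact hp.2 (by rwa [show u = x from Subtype.ext hval] at hu)

lemma firstStep (hnbr : G.neighborSet v₀ = {v₁, v₂})
    {x y : ↥({v₀, v₂}ᶜ : Set V)} (q : (bicontract G v₀ v₁ v₂).Walk x y)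
    (hx : (x : V) = v₁) (hy : (y : V) ≠ v₁) (hq : q.IsPath) :
    ((q.getVert 1 : V) ≠ v₁) ∧ (G.Adj v₁ (q.getVert 1 : V) ∨ G.Adj v₂ (q.getVert 1 : V)) := by
  cases q with
  | nil => exact absurd hx hy
  | @cons x m y h q =>
    rw [show (Walk.cons h q).getVert 1 = q.getVert 0 from rfl, Walk.getVert_zero]
    rw [Walk.cons_isPath_iff] at hq
    have hm : (m : V) ≠ v₁ := by
      intro he
      have hmx : m = x := Subtype.ext (he.trans hx.symm)
      exact hq.2 (hmx ▸ q.start_mem_support)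
    exact ⟨hm, adj_of_vb hnbr h hx hm⟩

lemma liftFrom (hnbr : G.neighborSet v₀ = {v₁, v₂}) (h12 : v₁ ≠ v₂)
    {s t : V} (hst : (s = v₁ ∧ t = v₂) ∨ (s = v₂ ∧ t = v₁))
    {x y : ↥({v₀, v₂}ᶜ : Set V)} (q : (bicontract G v₀ v₁ v₂).Walk x y)
    (hx : (x : V) = v₁) (hy : (y : V) ≠ v₁) (hq : q.IsPath) :
    ∃ L : G.Walk s (y : V),
      (G.Adj s (q.getVert 1 : V) → L.length = q.length ∧
        L.support = s :: q.support.tail.map Subtype.val) ∧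
      (¬ G.Adj s (q.getVert 1 : V) → L.length = q.length + 2 ∧
        L.support = s :: v₀ :: t :: q.support.tail.map Subtype.val) ∧
      L.IsPath := by
  have h01 : v₀ ≠ v₁ := (adj_v01 hnbr).ne
  have h02 : v₀ ≠ v₂ := (adj_v02 hnbr).ne
  have hs : s = v₁ ∨ s = v₂ := by
    rcases hst with ⟨h, -⟩ | ⟨h, -⟩
    exacts [Or.inl h, Or.inr h]
  have ht : t = v₁ ∨ t = v₂ := by
    rcases hst with ⟨-, h⟩ | ⟨-, h⟩
    exacts [Or.inr h, Or.inl h]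
  have hsnet : s ≠ t := by
    rcases hst with ⟨h1, h2⟩ | ⟨h1, h2⟩ <;> rw [h1, h2]
    exacts [h12, h12.symm]
  have hadjs0 : G.Adj s v₀ := by
    rcases hs with rfl | rfl
    exacts [(adj_v01 hnbr).symm, (adj_v02 hnbr).symm]
  have hadj0t : G.Adj v₀ t := by
    rcases ht with rfl | rfl
    exacts [adj_v01 hnbr, adj_v02 hnbr]
  have hsne0 : s ≠ v₀ := by
    rcases hs with rfl | rfl
    exacts [h01.symm, h02.symm]
  have htne0 : t ≠ v₀ := by
    rcases ht with rfl | rfl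
    exacts [h01.symm, h02.symm]
  cases q with
  | nil => exact absurd hx hy
  | @cons x m y h q =>
    rw [Walk.cons_isPath_iff] at hq
    have hm : (m : V) ≠ v₁ := fun he =>
      hq.2 ((Subtype.ext (he.trans hx.symm) : m = x) ▸ q.start_mem_support)
    have hall : ∀ u ∈ q.support, (u : V) ≠ v₁ := fun u hu he =>
      hq.2 ((Subtype.ext (he.trans hx.symm) : u = x) ▸ hu)
    obtain ⟨B, hBlen, hBsup, hBpath⟩ := liftPure q hall
    have hsnotin : s ∉ q.support.map Subtype.val := by
      intro hmem
      obtain ⟨u, hu, hval⟩ := List.mem_map.1 hmem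
      rcases hs with rfl | rfl
      exacts [hall u hu hval, val_ne_v2 u hval]
    have htnotin : t ∉ q.support.map Subtype.val := by
      intro hmem
      obtain ⟨u, hu, hval⟩ := List.mem_map.1 hmem
      rcases ht with rfl | rfl
      exacts [hall u hu hval, val_ne_v2 u hval]
    have h0notin : v₀ ∉ q.support.map Subtype.val := by
      intro hmem
      obtain ⟨u, hu, hval⟩ := List.mem_map.1 hmem
      exact val_ne_v0 u hval
    rw [show (Walk.cons h q).getVert 1 = q.getVert 0 from rfl, Walk.getVert_zero]
    have hG : G.Adj v₁ (m : V) ∨ G.Adj v₂ (m : V) := adj_of_vb hnbr h hx hm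
    by_cases hA : G.Adj s (m : V)
    · refine ⟨.cons hA B, fun _ => ⟨by simp [hBlen], by simp [hBsup]⟩,
        fun hc => absurd hA hc, ?_⟩
      rw [Walk.cons_isPath_iff]
      exact ⟨hBpath hq.1, by rw [hBsup]; exact hsnotin⟩
    · have hT : G.Adj t (m : V) := by
        rcases hst with ⟨h1, h2⟩ | ⟨h1, h2⟩ <;> rw [h1] at hA <;> rw [h2]
        · rcases hG with hg | hg
          exacts [absurd hg hA, hg]
        · rcases hG with hg | hg
          exacts [hg, absurd hg hA]
      refine ⟨.cons hadjs0 (.cons hadj0t (.cons hT B)), fun hc => absurd hc hA,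
        fun _ => ⟨by simp [hBlen], by simp [hBsup]⟩, ?_⟩
      rw [Walk.cons_isPath_iff, Walk.cons_isPath_iff, Walk.cons_isPath_iff]
      refine ⟨⟨⟨hBpath hq.1, by rw [hBsup]; exact htnotin⟩, ?_⟩, ?_⟩
      · rw [Walk.support_cons, hBsup]
        simp only [List.mem_cons, not_or]
        exact ⟨htne0.symm, h0notin⟩
      · rw [Walk.support_cons, Walk.support_cons, hBsup]
        simp only [List.mem_cons, not_or]
        exact ⟨hsne0, hsnet, hsnotin⟩

end Lifts

/-- Let `G` be a matching covered graph and `v₀` a vertex of degree two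
with two distinct neighbors `v₁, v₂`, and let `K` be a graph of maximum degree at most 3.
If the bicontraction `G/v₀` is `K`-based, then so is `G`. -/
theorem bicontract_based_implies_based {W : Type*} [Fintype V] [Fintype W] [DecidableEq V]
    (G : SimpleGraph V) (hmc : MatchingCovered G) (v₀ v₁ v₂ : V) (h12 : v₁ ≠ v₂)
    (hnbr : G.neighborSet v₀ = {v₁, v₂})
    (K : SimpleGraph W) (hdeg : ∀ w : W, (K.neighborSet w).ncard ≤ 3)
    (hbased : IsBasedOn (bicontract G v₀ v₁ v₂) K) :
    IsBasedOn G K := by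
  classical
  obtain ⟨f, p, hpath, hodd, hc3, hc4⟩ := hbased
  have h01 : v₀ ≠ v₁ := (adj_v01 hnbr).ne
  have h02 : v₀ ≠ v₂ := (adj_v02 hnbr).ne
  have hv1S : v₁ ∈ ({v₀, v₂}ᶜ : Set V) := by
    simp only [Set.mem_compl_iff, Set.mem_insert_iff, Set.mem_singleton_iff]
    push_neg
    exact ⟨h01.symm, h12⟩
  -- canonically oriented family of paths
  obtain ⟨q, hqrev, hqpath, hqodd, hqc3, hqc4⟩ :
      ∃ q : ∀ a b : W, K.Adj a b → (bicontract G v₀ v₁ v₂).Walk (f a) (f b),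
        (∀ a b (hab : K.Adj a b), q b a hab.symm = (q a b hab).reverse) ∧
        (∀ a b hab, (q a b hab).IsPath) ∧
        (∀ a b hab, Odd (q a b hab).length) ∧
        (∀ a b hab c, f c ∈ (q a b hab).support → c = a ∨ c = b) ∧
        (∀ a b hab a' b' hab', s(a, b) ≠ s(a', b') →
          ∀ w, w ∈ (q a b hab).support → w ∈ (q a' b' hab').support →
            (w = f a ∨ w = f b) ∧ (w = f a' ∨ w = f b')) := by
    let e := Fintype.equivFin W
    refine ⟨fun a b hab => if e a ≤ e b then p a b hab else (p b a hab.symm).reverse,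
      ?_, ?_, ?_, ?_, ?_⟩
    · intro a b hab
      have hne : e a ≠ e b := fun hh => hab.ne (e.injective hh)
      dsimp only
      rcases le_or_gt (e a) (e b) with hle | hlt
      · rw [if_neg (fun hh => hne (le_antisymm hle hh)), if_pos hle]
      · rw [if_pos hlt.le, if_neg (not_le.2 hlt), Walk.reverse_reverse]
    · intro a b hab
      dsimp only
      split
      exacts [hpath a b hab, (hpath b a hab.symm).reverse]
    · intro a b hab
      dsimp only
      split
      exacts [hodd a b hab, by rw [Walk.length_reverse]; exact hodd b a hab.symm]
    · intro a b hab c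
      dsimp only
      split <;> intro hc
      · exact hc3 a b hab c hc
      · rw [Walk.support_reverse, List.mem_reverse] at hc
        exact (hc3 b a hab.symm c hc).symm
    · intro a b hab a' b' hab' hne w
      dsimp only
      split <;> split <;> intro hw hw'
      · exact hc4 a b hab a' b' hab' hne w hw hw'
      · rw [Walk.support_reverse, List.mem_reverse] at hw'
        exact (hc4 a b hab b' a' hab'.symm (by rwa [Sym2.eq_swap (a := a') (b := b')] at hne)
          w hw hw').imp id Or.symm
      · rw [Walk.support_reverse, List.mem_reverse] at hw
        exact (hc4 b a hab.symm a' b' hab' (by rwa [Sym2.eq_swap (a := a) (b := b)] at hne)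
          w hw hw').imp Or.symm id
      · rw [Walk.support_reverse, List.mem_reverse] at hw hw'
        exact (hc4 b a hab.symm b' a' hab'.symm
          (by rwa [Sym2.eq_swap (a := a) (b := b), Sym2.eq_swap (a := a') (b := b')] at hne)
          w hw hw').imp Or.symm Or.symm
  set vb : ↥({v₀, v₂}ᶜ : Set V) := ⟨v₁, hv1S⟩ with hvbdef
  have hvne : ∀ u : ↥({v₀, v₂}ᶜ : Set V), u ≠ vb → (u : V) ≠ v₁ :=
    fun u hu he => hu (Subtype.ext he)
  have hfne : ∀ {a b : W}, K.Adj a b → f a ≠ f b := fun hab he => hab.ne (f.injective he)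
  have hfbne : ∀ {a b : W}, K.Adj a b → f a = vb → (f b : V) ≠ v₁ := by
    intro a b hab hfa he
    exact hfne hab (hfa.trans (Subtype.ext he).symm)
  have hdich : ∀ a b (hab : K.Adj a b), f a = vb →
      (((q a b hab).getVert 1 : V) ≠ v₁ ∧
        (G.Adj v₁ ((q a b hab).getVert 1 : V) ∨ G.Adj v₂ ((q a b hab).getVert 1 : V))) :=
    fun a b hab hfa =>
      firstStep hnbr (q a b hab) (by rw [hfa]) (hfbne hab hfa) (hqpath a b hab)
  -- choice of the branch image s (with companion t)
  obtain ⟨s, t, hst, hH4x⟩ :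
      ∃ s t : V, ((s = v₁ ∧ t = v₂) ∨ (s = v₂ ∧ t = v₁)) ∧
        ∀ a b hab a' b' hab', s(a, b) ≠ s(a', b') →
          ¬(((f a = vb ∧ ¬G.Adj s ((q a b hab).getVert 1 : V)) ∨
             (f b = vb ∧ ¬G.Adj s ((q b a hab.symm).getVert 1 : V))) ∧
            ((f a' = vb ∧ ¬G.Adj s ((q a' b' hab').getVert 1 : V)) ∨
             (f b' = vb ∧ ¬G.Adj s ((q b' a' hab'.symm).getVert 1 : V)))) := by
    by_cases hcex : ∃ c, f c = vb
    · obtain ⟨c, hfc⟩ := hcex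
      have hshape : ∀ (s' : V) (a b : W) (hab : K.Adj a b),
          ((f a = vb ∧ ¬G.Adj s' ((q a b hab).getVert 1 : V)) ∨
           (f b = vb ∧ ¬G.Adj s' ((q b a hab.symm).getVert 1 : V))) →
          ∃ (d : W) (hd : K.Adj c d), s(c, d) = s(a, b) ∧
            ¬G.Adj s' ((q c d hd).getVert 1 : V) := by
        rintro s' a b hab (⟨h1, h2⟩ | ⟨h1, h2⟩)
        · have hac : a = c := f.injective (h1.trans hfc.symm)
          subst hac
          exact ⟨b, hab, rfl, h2⟩
        · have hbc : b = c := f.injective (h1.trans hfc.symm)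
          subst hbc
          exact ⟨a, hab.symm, Sym2.eq_swap, h2⟩
      by_cases hH1 : ∀ a b hab a' b' hab', s(a, b) ≠ s(a', b') →
          ¬(((f a = vb ∧ ¬G.Adj v₁ ((q a b hab).getVert 1 : V)) ∨
             (f b = vb ∧ ¬G.Adj v₁ ((q b a hab.symm).getVert 1 : V))) ∧
            ((f a' = vb ∧ ¬G.Adj v₁ ((q a' b' hab').getVert 1 : V)) ∨
             (f b' = vb ∧ ¬G.Adj v₁ ((q b' a' hab'.symm).getVert 1 : V))))
      · exact ⟨v₁, v₂, Or.inl ⟨rfl, rfl⟩, hH1⟩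
      · refine ⟨v₂, v₁, Or.inr ⟨rfl, rfl⟩, ?_⟩
        by_contra hH2
        push_neg at hH1 hH2
        obtain ⟨a1, b1, hab1, a1', b1', hab1', hne1, hE1, hE1'⟩ := hH1
        obtain ⟨a2, b2, hab2, a2', b2', hab2', hne2, hE2, hE2'⟩ := hH2
        obtain ⟨d₁, hd₁, he₁, hbad₁⟩ := hshape v₁ _ _ _ hE1
        obtain ⟨d₂, hd₂, he₂, hbad₂⟩ := hshape v₁ _ _ _ hE1'
        obtain ⟨d₃, hd₃, he₃, hbad₃⟩ := hshape v₂ _ _ _ hE2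
        obtain ⟨d₄, hd₄, he₄, hbad₄⟩ := hshape v₂ _ _ _ hE2'
        have hA₁ : G.Adj v₂ ((q c d₁ hd₁).getVert 1 : V) :=
          ((hdich c d₁ hd₁ hfc).2).resolve_left hbad₁
        have hA₂ : G.Adj v₂ ((q c d₂ hd₂).getVert 1 : V) :=
          ((hdich c d₂ hd₂ hfc).2).resolve_left hbad₂
        have hA₃ : G.Adj v₁ ((q c d₃ hd₃).getVert 1 : V) :=
          ((hdich c d₃ hd₃ hfc).2).resolve_right hbad₃
        have hA₄ : G.Adj v₁ ((q c d₄ hd₄).getVert 1 : V) :=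
          ((hdich c d₄ hd₄ hfc).2).resolve_right hbad₄
        have h12' : d₁ ≠ d₂ := fun hdd => hne1 (he₁.symm.trans (hdd ▸ he₂))
        have h34' : d₃ ≠ d₄ := fun hdd => hne2 (he₃.symm.trans (hdd ▸ he₄))
        have h13' : d₁ ≠ d₃ := by intro hdd; subst hdd; exact hbad₁ hA₃
        have h14' : d₁ ≠ d₄ := by intro hdd; subst hdd; exact hbad₁ hA₄
        have h23' : d₂ ≠ d₃ := by intro hdd; subst hdd; exact hbad₂ hA₃
        have h24' : d₂ ≠ d₄ := by intro hdd; subst hdd; exact hbad₂ hA₄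
        have hsub : ({d₁, d₂, d₃, d₄} : Set W) ⊆ K.neighborSet c := by
          intro z hz
          rcases hz with rfl | rfl | rfl | rfl
          exacts [hd₁, hd₂, hd₃, hd₄]
        have h4 : ({d₁, d₂, d₃, d₄} : Set W).ncard = 4 := by
          rw [Set.ncard_insert_of_notMem (by simp [h12', h13', h14']),
            Set.ncard_insert_of_notMem (by simp [h23', h24']), Set.ncard_pair h34']
        have hle4 := Set.ncard_le_ncard hsub (Set.toFinite _)
        rw [h4] at hle4
        have := hdeg c
        omega
    · refine ⟨v₁, v₂, Or.inl ⟨rfl, rfl⟩, ?_⟩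
      rintro a b hab a' b' hab' - ⟨(⟨h1, -⟩ | ⟨h1, -⟩), -⟩ <;> exact hcex ⟨_, h1⟩
  
  have hs12 : s = v₁ ∨ s = v₂ := by
    rcases hst with ⟨h, -⟩ | ⟨h, -⟩
    exacts [Or.inl h, Or.inr h]
  have ht12 : t = v₁ ∨ t = v₂ := by
    rcases hst with ⟨-, h⟩ | ⟨-, h⟩
    exacts [Or.inr h, Or.inl h]
  have hsmem : s = v₀ ∨ s = v₁ ∨ s = v₂ := Or.inr hs12
  -- the new embedding
  have hf'inj : Function.Injective (fun w : W => if f w = vb then s else (f w : V)) := by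
    intro x y hxy
    dsimp only at hxy
    by_cases hx : f x = vb <;> by_cases hy : f y = vb
    · exact f.injective (hx.trans hy.symm)
    · rw [if_pos hx, if_neg hy] at hxy
      exfalso
      rcases hs12 with rfl | rfl
      exacts [hvne _ hy hxy.symm, val_ne_v2 _ hxy.symm]
    · rw [if_neg hx, if_pos hy] at hxy
      exfalso
      rcases hs12 with rfl | rfl
      exacts [hvne _ hx hxy, val_ne_v2 _ hxy]
    · rw [if_neg hx, if_neg hy] at hxy
      exact f.injective (Subtype.ext hxy)
  let f' : W ↪ V := ⟨fun w => if f w = vb then s else (f w : V), hf'inj⟩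
  have hf'vb : ∀ w, f w = vb → f' w = s := by
    intro w hw
    simp only [f', Function.Embedding.coeFn_mk]
    exact if_pos hw
  have hf'n : ∀ w, f w ≠ vb → f' w = (f w : V) := by
    intro w hw
    simp only [f', Function.Embedding.coeFn_mk]
    exact if_neg hw
  -- the per-path lift
  have hlift : ∀ a b (hab : K.Adj a b), ∃ L : G.Walk (f' a) (f' b), L.IsPath ∧ Odd L.length ∧
      ∀ w' ∈ L.support, (∃ u ∈ (q a b hab).support, u ≠ vb ∧ w' = (u : V)) ∨
        ((w' = v₀ ∨ w' = v₁ ∨ w' = v₂) ∧ vb ∈ (q a b hab).support ∧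
          ((f a ≠ vb ∧ f b ≠ vb) ∨ w' = s ∨
            (f a = vb ∧ ¬G.Adj s ((q a b hab).getVert 1 : V)) ∨
            (f b = vb ∧ ¬G.Adj s ((q b a hab.symm).getVert 1 : V)))) := by
    intro a b hab
    by_cases hvbP : vb ∈ (q a b hab).support
    · by_cases hfa : f a = vb
      · -- branch endpoint at the a-side
        have hfb : f b ≠ vb := fun he => hfne hab (hfa.trans he.symm)
        obtain ⟨L₀, hAdj, hNAdj, hPth⟩ := liftFrom hnbr h12 hst (q a b hab)
          (by rw [hfa]) (hfbne hab hfa) (hqpath a b hab)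
        have htail : ∀ u ∈ (q a b hab).support.tail, u ∈ (q a b hab).support ∧ u ≠ vb := by
          have hnd := (hqpath a b hab).support_nodup
          have hcons := (q a b hab).support_eq_cons
          rw [hcons] at hnd
          intro u hu
          refine ⟨by rw [hcons]; exact List.mem_cons_of_mem _ hu, fun he => ?_⟩
          have hvt : vb ∈ (q a b hab).support.tail := he ▸ hu
          rw [← hfa] at hvt
          exact (List.nodup_cons.1 hnd).1 hvt
        refine ⟨L₀.copy (hf'vb a hfa).symm (hf'n b hfb).symm, by simp [hPth], ?_, ?_⟩
        · rw [Walk.length_copy]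
          by_cases hA : G.Adj s ((q a b hab).getVert 1 : V)
          · rw [(hAdj hA).1]; exact hqodd a b hab
          · rw [(hNAdj hA).1]
            obtain ⟨k, hk⟩ := hqodd a b hab
            exact ⟨k + 1, by omega⟩
        · intro w' hw'
          rw [Walk.support_copy] at hw'
          by_cases hA : G.Adj s ((q a b hab).getVert 1 : V)
          · rw [(hAdj hA).2] at hw'
            rcases List.mem_cons.1 hw' with rfl | hw'
            · exact Or.inr ⟨hsmem, hvbP, Or.inr (Or.inl rfl)⟩
            · obtain ⟨u, hu, rfl⟩ := List.mem_map.1 hw'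
              obtain ⟨hu1, hu2⟩ := htail u hu
              exact Or.inl ⟨u, hu1, hu2, rfl⟩
          · rw [(hNAdj hA).2] at hw'
            rcases List.mem_cons.1 hw' with rfl | hw'
            · exact Or.inr ⟨hsmem, hvbP, Or.inr (Or.inl rfl)⟩
            rcases List.mem_cons.1 hw' with rfl | hw'
            · exact Or.inr ⟨Or.inl rfl, hvbP, Or.inr (Or.inr (Or.inl ⟨hfa, hA⟩))⟩
            rcases List.mem_cons.1 hw' with rfl | hw'
            · exact Or.inr ⟨Or.inr ht12, hvbP, Or.inr (Or.inr (Or.inl ⟨hfa, hA⟩))⟩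
            · obtain ⟨u, hu, rfl⟩ := List.mem_map.1 hw'
              obtain ⟨hu1, hu2⟩ := htail u hu
              exact Or.inl ⟨u, hu1, hu2, rfl⟩
      · by_cases hfb : f b = vb
        · -- branch endpoint at the b-side
          obtain ⟨L₀, hAdj, hNAdj, hPth⟩ := liftFrom hnbr h12 hst (q b a hab.symm)
            (by rw [hfb]) (hfbne hab.symm hfb) (hqpath b a hab.symm)
          have hmemrev : ∀ u, u ∈ (q b a hab.symm).support → u ∈ (q a b hab).support := by
            intro u hu
            rwa [hqrev a b hab, Walk.support_reverse, List.mem_reverse] at hu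
          have htail : ∀ u ∈ (q b a hab.symm).support.tail,
              u ∈ (q a b hab).support ∧ u ≠ vb := by
            have hnd := (hqpath b a hab.symm).support_nodup
            have hcons := (q b a hab.symm).support_eq_cons
            rw [hcons] at hnd
            intro u hu
            refine ⟨hmemrev u (by rw [hcons]; exact List.mem_cons_of_mem _ hu), fun he => ?_⟩
            have hvt : vb ∈ (q b a hab.symm).support.tail := he ▸ hu
            rw [← hfb] at hvt
            exact (List.nodup_cons.1 hnd).1 hvt
          refine ⟨(L₀.reverse).copy (hf'n a hfa).symm (hf'vb b hfb).symm, by simp [hPth], ?_, ?_⟩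
          · rw [Walk.length_copy, Walk.length_reverse]
            by_cases hA : G.Adj s ((q b a hab.symm).getVert 1 : V)
            · rw [(hAdj hA).1]; exact hqodd b a hab.symm
            · rw [(hNAdj hA).1]
              obtain ⟨k, hk⟩ := hqodd b a hab.symm
              exact ⟨k + 1, by omega⟩
          · intro w' hw'
            rw [Walk.support_copy, Walk.support_reverse, List.mem_reverse] at hw'
            by_cases hA : G.Adj s ((q b a hab.symm).getVert 1 : V)
            · rw [(hAdj hA).2] at hw'
              rcases List.mem_cons.1 hw' with rfl | hw'
              · exact Or.inr ⟨hsmem, hvbP, Or.inr (Or.inl rfl)⟩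
              · obtain ⟨u, hu, rfl⟩ := List.mem_map.1 hw'
                obtain ⟨hu1, hu2⟩ := htail u hu
                exact Or.inl ⟨u, hu1, hu2, rfl⟩
            · rw [(hNAdj hA).2] at hw'
              rcases List.mem_cons.1 hw' with rfl | hw'
              · exact Or.inr ⟨hsmem, hvbP, Or.inr (Or.inl rfl)⟩
              rcases List.mem_cons.1 hw' with rfl | hw'
              · exact Or.inr ⟨Or.inl rfl, hvbP, Or.inr (Or.inr (Or.inr ⟨hfb, hA⟩))⟩
              rcases List.mem_cons.1 hw' with rfl | hw'
              · exact Or.inr ⟨Or.inr ht12, hvbP, Or.inr (Or.inr (Or.inr ⟨hfb, hA⟩))⟩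
              · obtain ⟨u, hu, rfl⟩ := List.mem_map.1 hw'
                obtain ⟨hu1, hu2⟩ := htail u hu
                exact Or.inl ⟨u, hu1, hu2, rfl⟩
        · -- vb interior to the path
          have hP := hqpath a b hab
          have hspec : ((q a b hab).takeUntil vb hvbP).append ((q a b hab).dropUntil vb hvbP)
              = q a b hab := (q a b hab).take_spec hvbP
          set d₁ := (q a b hab).takeUntil vb hvbP with hd₁def
          set d₂ := (q a b hab).dropUntil vb hvbP with hd₂def
          have hd₁p : d₁.IsPath := hP.takeUntil hvbP
          have hd₂p : d₂.IsPath := hP.dropUntil hvbP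
          have hfa' : (f a : V) ≠ v₁ := hvne _ hfa
          have hfb' : (f b : V) ≠ v₁ := hvne _ hfb
          have hPsup : (q a b hab).support = d₁.support ++ d₂.support.tail := by
            rw [← hspec, Walk.support_append]
          have hPnd : (d₁.support ++ d₂.support.tail).Nodup := by
            rw [← hPsup]; exact hP.support_nodup
          have hdisj : ∀ u, u ∈ d₁.support → u ∈ d₂.support.tail → False := by
            intro u h1 h2
            exact (List.disjoint_of_nodup_append hPnd) h1 h2
          have hd₁rp : d₁.reverse.IsPath := hd₁p.reverse
          have htail₁ : ∀ u ∈ d₁.reverse.support.tail,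
              (u ∈ (q a b hab).support ∧ u ∈ d₁.support) ∧ u ≠ vb := by
            have hnd := hd₁rp.support_nodup
            have hcons := d₁.reverse.support_eq_cons
            rw [hcons] at hnd
            intro u hu
            have hu1 : u ∈ d₁.support := by
              have : u ∈ d₁.reverse.support := by rw [hcons]; exact List.mem_cons_of_mem _ hu
              rwa [Walk.support_reverse, List.mem_reverse] at this
            refine ⟨⟨by rw [hPsup]; exact List.mem_append_left _ hu1, hu1⟩, fun he => ?_⟩
            exact (List.nodup_cons.1 hnd).1 (he ▸ hu)
          have htail₂ : ∀ u ∈ d₂.support.tail, u ∈ (q a b hab).support ∧ u ≠ vb := by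
            have hnd := hd₂p.support_nodup
            have hcons := d₂.support_eq_cons
            rw [hcons] at hnd
            intro u hu
            refine ⟨by rw [hPsup]; exact List.mem_append_right _ hu, fun he => ?_⟩
            exact (List.nodup_cons.1 hnd).1 (he ▸ hu)
          obtain ⟨-, hdi⟩ := firstStep hnbr d₁.reverse rfl hfa' hd₁rp
          obtain ⟨s', t', hst', hs'adj⟩ : ∃ s' t' : V,
              ((s' = v₁ ∧ t' = v₂) ∨ (s' = v₂ ∧ t' = v₁)) ∧
                G.Adj s' (d₁.reverse.getVert 1 : V) := by
            rcases hdi with h | h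
            exacts [⟨v₁, v₂, Or.inl ⟨rfl, rfl⟩, h⟩, ⟨v₂, v₁, Or.inr ⟨rfl, rfl⟩, h⟩]
          have hs'12 : s' = v₁ ∨ s' = v₂ := by
            rcases hst' with ⟨h, -⟩ | ⟨h, -⟩
            exacts [Or.inl h, Or.inr h]
          have ht'12 : t' = v₁ ∨ t' = v₂ := by
            rcases hst' with ⟨-, h⟩ | ⟨-, h⟩
            exacts [Or.inr h, Or.inl h]
          obtain ⟨L₁, hAdj₁, -, hPth₁⟩ := liftFrom hnbr h12 hst' d₁.reverse rfl hfa' hd₁rp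
          obtain ⟨hlen₁, hsup₁⟩ := hAdj₁ hs'adj
          obtain ⟨L₂, hAdj₂, hNAdj₂, hPth₂⟩ := liftFrom hnbr h12 hst' d₂ rfl hfb' hd₂p
          obtain ⟨REST, hlen₂, hsup₂, hRESTmem⟩ :
              ∃ REST : List V, (L₂.length = d₂.length ∨ L₂.length = d₂.length + 2) ∧
                L₂.support = s' :: REST ∧
                (∀ z ∈ REST, z = v₀ ∨ z = t' ∨ z ∈ d₂.support.tail.map Subtype.val) := by
            by_cases hA₂ : G.Adj s' (d₂.getVert 1 : V)
            · obtain ⟨h1, h2⟩ := hAdj₂ hA₂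
              exact ⟨_, Or.inl h1, h2, fun z hz => Or.inr (Or.inr hz)⟩
            · obtain ⟨h1, h2⟩ := hNAdj₂ hA₂
              refine ⟨v₀ :: t' :: d₂.support.tail.map Subtype.val, Or.inr h1, h2, ?_⟩
              intro z hz
              rcases List.mem_cons.1 hz with rfl | hz
              · exact Or.inl rfl
              rcases List.mem_cons.1 hz with rfl | hz
              · exact Or.inr (Or.inl rfl)
              · exact Or.inr (Or.inr hz)
          refine ⟨(L₁.reverse.append L₂).copy (hf'n a hfa).symm (hf'n b hfb).symm, ?_, ?_, ?_⟩
          · -- IsPath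
            rw [Walk.isPath_copy, Walk.isPath_def, Walk.support_append, Walk.support_reverse,
              hsup₁, hsup₂, List.tail_cons, List.nodup_append]
            refine ⟨by rw [List.nodup_reverse, ← hsup₁]; exact hPth₁.support_nodup,
              (List.nodup_cons.1 (hsup₂ ▸ hPth₂.support_nodup)).2, ?_⟩
            intro z hz z' hz' hzz
            subst hzz
            rw [List.mem_reverse] at hz
            rcases List.mem_cons.1 hz with rfl | hz
            · exact (List.nodup_cons.1 (hsup₂ ▸ hPth₂.support_nodup)).1 hz'
            · obtain ⟨u, hu, rfl⟩ := List.mem_map.1 hz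
              obtain ⟨⟨-, hu1⟩, hu2⟩ := htail₁ u hu
              rcases hRESTmem _ hz' with h | h | h
              · exact val_ne_v0 u h
              · rcases ht'12 with rfl | rfl
                exacts [hvne u hu2 h, val_ne_v2 u h]
              · obtain ⟨u', hu', hval⟩ := List.mem_map.1 h
                exact hdisj u hu1 (by rwa [show u' = u from Subtype.ext hval] at hu')
          · -- Odd length
            rw [Walk.length_copy, Walk.length_append, Walk.length_reverse, hlen₁,
              Walk.length_reverse]
            obtain ⟨k, hk⟩ := hqodd a b hab
            have hPlen : (q a b hab).length = d₁.length + d₂.length := by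
              rw [← hspec, Walk.length_append]
            rcases hlen₂ with h | h <;> rw [h]
            · exact ⟨k, by omega⟩
            · exact ⟨k + 1, by omega⟩
          · -- support
            intro w' hw'
            rw [Walk.support_copy, Walk.support_append, Walk.support_reverse, hsup₁, hsup₂,
              List.tail_cons] at hw'
            rcases List.mem_append.1 hw' with hw' | hw'
            · rw [List.mem_reverse] at hw'
              rcases List.mem_cons.1 hw' with rfl | hw'
              · exact Or.inr ⟨Or.inr hs'12, hvbP, Or.inl ⟨hfa, hfb⟩⟩
              · obtain ⟨u, hu, rfl⟩ := List.mem_map.1 hw'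
                obtain ⟨⟨hu1, -⟩, hu2⟩ := htail₁ u hu
                exact Or.inl ⟨u, hu1, hu2, rfl⟩
            · rcases hRESTmem _ hw' with rfl | rfl | hw'
              · exact Or.inr ⟨Or.inl rfl, hvbP, Or.inl ⟨hfa, hfb⟩⟩
              · exact Or.inr ⟨Or.inr ht'12, hvbP, Or.inl ⟨hfa, hfb⟩⟩
              · obtain ⟨u, hu, rfl⟩ := List.mem_map.1 hw'
                obtain ⟨hu1, hu2⟩ := htail₂ u hu
                exact Or.inl ⟨u, hu1, hu2, rfl⟩
    · -- vb not on the path at all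
      have hall : ∀ u ∈ (q a b hab).support, (u : V) ≠ v₁ :=
        fun u hu => hvne u (fun he => hvbP (he ▸ hu))
      obtain ⟨L₀, hlen, hsup, hp⟩ := liftPure (q a b hab) hall
      have hfa : f a ≠ vb := fun he => hvbP (he ▸ (q a b hab).start_mem_support)
      have hfb : f b ≠ vb := fun he => hvbP (he ▸ (q a b hab).end_mem_support)
      refine ⟨L₀.copy (hf'n a hfa).symm (hf'n b hfb).symm, by simp [hp (hqpath a b hab)],
        by rw [Walk.length_copy, hlen]; exact hqodd a b hab, ?_⟩
      intro w' hw'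
      rw [Walk.support_copy, hsup] at hw'
      obtain ⟨u, hu, rfl⟩ := List.mem_map.1 hw'
      exact Or.inl ⟨u, hu, fun he => hvbP (he ▸ hu), rfl⟩
  -- assemble
  choose L hLpath hLodd hLsupp using hlift
  refine ⟨f', L, hLpath, hLodd, ?_, ?_⟩
  · -- branch vertices only at endpoints
    intro a b hab c hc
    rcases hLsupp a b hab _ hc with ⟨u, hu, hune, heq⟩ | ⟨hmem3, hvbs, -⟩
    · have hfc : f c ≠ vb := by
        intro he
        rw [hf'vb c he] at heq
        rcases hs12 with rfl | rfl
        exacts [hvne u hune heq.symm, val_ne_v2 u heq.symm]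
      rw [hf'n c hfc] at heq
      exact hqc3 a b hab c (by rwa [show f c = u from Subtype.ext heq])
    · have hfc : f c = vb := by
        by_contra hfc
        rw [hf'n c hfc] at hmem3
        rcases hmem3 with h | h | h
        exacts [val_ne_v0 _ h, hfc (Subtype.ext h), val_ne_v2 _ h]
      exact hqc3 a b hab c (by rw [hfc]; exact hvbs)
  · -- internal disjointness
    intro a b hab a' b' hab' hne w hw hw'
    have hval' : ∀ (c : W) (u : ↥({v₀, v₂}ᶜ : Set V)), u ≠ vb → u = f c → (u : V) = f' c := by
      intro c u hune h
      rw [hf'n c (h ▸ hune), ← h]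
    rcases hLsupp a b hab w hw with ⟨u, hu, hune, rfl⟩ | ⟨hm1, hvb1, halt1⟩
    · rcases hLsupp a' b' hab' _ hw' with ⟨u', hu', hune', hval⟩ | ⟨hm1', -, -⟩
      · have huu : u' = u := Subtype.ext hval.symm
        subst huu
        have hcc := hqc4 a b hab a' b' hab' hne u' hu hu'
        exact ⟨hcc.1.imp (hval' a u' hune) (hval' b u' hune),
          hcc.2.imp (hval' a' u' hune) (hval' b' u' hune)⟩
      · exfalso
        rcases hm1' with h | h | h
        exacts [val_ne_v0 u h, hvne u hune h, val_ne_v2 u h]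
    · rcases hLsupp a' b' hab' w hw' with ⟨u', hu', hune', rfl⟩ | ⟨hm2, hvb2, halt2⟩
      · exfalso
        rcases hm1 with h | h | h
        exacts [val_ne_v0 u' h, hvne u' hune' h, val_ne_v2 u' h]
      · have hept := hqc4 a b hab a' b' hab' hne vb hvb1 hvb2
        have hne1 : ¬(f a ≠ vb ∧ f b ≠ vb) := by
          rcases hept.1 with h | h
          exacts [fun hc => hc.1 h.symm, fun hc => hc.2 h.symm]
        have hne2 : ¬(f a' ≠ vb ∧ f b' ≠ vb) := by
          rcases hept.2 with h | h
          exacts [fun hc => hc.1 h.symm, fun hc => hc.2 h.symm]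
        have hws : w = s := by
          rcases halt1 with h | h | h | h
          · exact absurd h hne1
          · exact h
          · rcases halt2 with h2 | h2 | h2 | h2
            · exact absurd h2 hne2
            · exact h2
            · exact absurd ⟨Or.inl h, Or.inl h2⟩ (hH4x a b hab a' b' hab' hne)
            · exact absurd ⟨Or.inl h, Or.inr h2⟩ (hH4x a b hab a' b' hab' hne)
          · rcases halt2 with h2 | h2 | h2 | h2
            · exact absurd h2 hne2
            · exact h2
            · exact absurd ⟨Or.inr h, Or.inl h2⟩ (hH4x a b hab a' b' hab' hne)
            · exact absurd ⟨Or.inr h, Or.inr h2⟩ (hH4x a b hab a' b' hab' hne)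
        subst hws
        constructor
        · rcases hept.1 with h | h
          · exact Or.inl (hf'vb a h.symm).symm
          · exact Or.inr (hf'vb b h.symm).symm
        · rcases hept.2 with h | h
          · exact Or.inl (hf'vb a' h.symm).symm
          · exact Or.inr (hf'vb b' h.symm).symm
end

section
/- Let G be a graph obtained from a graph H by bisplitting a vertex of degree four or more. If H contains a mixed bicycle, then so does G. -/
open SimpleGraph

variable {V : Type*}

/-- A mixed bicycle: a pair of vertex-disjoint cycles, one odd and one even
(of length at least four). -/
def HasMixedBicycle (G : SimpleGraph V) : Prop :=
  ∃ (u v : V) (Qo : G.Walk u u) (Qe : G.Walk v v),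
    Qo.IsCycle ∧ Qe.IsCycle ∧ Odd Qo.length ∧ Even Qe.length ∧ 4 ≤ Qe.length ∧
    ∀ w ∈ Qo.support, w ∉ Qe.support

/-- `G` is obtained from `H` by bisplitting a vertex `v` of degree at least four:
`v` is replaced by two vertices `v₁, v₂`, the edges at `v` are distributed among
`v₁` and `v₂` so that each receives at least two of them, and a new vertex `v₀` is
added together with the edges `v₀v₁` and `v₀v₂`. -/
def BisplitOf {V' : Type*} (G : SimpleGraph V') (H : SimpleGraph V) : Prop :=
  ∃ (v : V) (v₀ v₁ v₂ : V') (f : {w : V // w ≠ v} → V'),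
    v₀ ≠ v₁ ∧ v₀ ≠ v₂ ∧ v₁ ≠ v₂ ∧
    Function.Injective f ∧
    (∀ a, f a ≠ v₀ ∧ f a ≠ v₁ ∧ f a ≠ v₂) ∧
    (∀ x : V', x ≠ v₀ → x ≠ v₁ → x ≠ v₂ → ∃ a, f a = x) ∧
    4 ≤ (H.neighborSet v).ncard ∧
    (∀ a b, G.Adj (f a) (f b) ↔ H.Adj a.1 b.1) ∧
    (∀ a, (G.Adj (f a) v₁ ∨ G.Adj (f a) v₂) ↔ H.Adj a.1 v) ∧
    (∀ a, ¬ (G.Adj (f a) v₁ ∧ G.Adj (f a) v₂)) ∧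
    (∀ x : V', G.Adj x v₀ ↔ (x = v₁ ∨ x = v₂)) ∧
    ¬ G.Adj v₁ v₂ ∧
    2 ≤ {x : V' | G.Adj x v₁ ∧ x ≠ v₀}.ncard ∧
    2 ≤ {x : V' | G.Adj x v₂ ∧ x ≠ v₀}.ncard

namespace BisplitAux

open SimpleGraph.Walk

variable {V' : Type*} {G : SimpleGraph V'}

lemma mem_support_closed {u x : V'} {c : G.Walk u u} (hc : ¬ c.Nil) :
    x ∈ c.support ↔ x ∈ c.support.tail := by
  cases c with
  | nil => simp at hc
  | cons h p =>
    simp only [Walk.support_cons, List.tail_cons, List.mem_cons]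
    constructor
    · rintro (rfl | hx)
      · exact p.end_mem_support
      · exact hx
    · exact Or.inr

lemma mem_support_rotate [DecidableEq V'] {u x y : V'} (c : G.Walk u u) (hc : c.IsCycle) (h : x ∈ c.support) :
    y ∈ (c.rotate x h).support ↔ y ∈ c.support := by
  rw [mem_support_closed (hc.rotate h).not_nil, mem_support_closed hc.not_nil]
  exact (Walk.support_rotate c x h).mem_iff

lemma length_rotate' [DecidableEq V'] {u x : V'} (c : G.Walk u u) (h : x ∈ c.support) :
    (c.rotate x h).length = c.length := by
  rw [← Walk.length_edges, ← Walk.length_edges, (Walk.rotate_edges c x h).perm.length_eq]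

lemma isPath_concat {x y z : V'} {p : G.Walk x y} (hp : p.IsPath) (h : G.Adj y z)
    (hz : z ∉ p.support) : (p.concat h).IsPath := by
  rw [← Walk.isPath_reverse_iff, Walk.reverse_concat]
  exact hp.reverse.cons (by simpa [Walk.support_reverse] using hz)

lemma isPath_nil_of_closed {w : V'} {r : G.Walk w w} (hr : r.IsPath) : r.length = 0 := by
  by_contra hlen
  have hnil : ¬ r.Nil := by
    rw [Walk.not_nil_iff_lt_length]; omega
  have hmem : w ∈ r.support.tail :=
    (mem_support_closed hnil).mp r.start_mem_support
  have := hr.support_nodup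
  rw [r.support_eq_cons, List.nodup_cons] at this
  exact this.1 hmem

/-- attach a path at both ends to a single vertex `s`, making a cycle -/
lemma cycle_one_attach {x y s : V'} (R : G.Walk x y) (hR : R.IsPath) (hxy : x ≠ y)
    (hs : s ∉ R.support) (hsx : G.Adj s x) (hys : G.Adj y s) :
    ∃ C : G.Walk s s, C.IsCycle ∧ C.length = R.length + 2 ∧
      ∀ z ∈ C.support, z = s ∨ z ∈ R.support := by
  refine ⟨Walk.cons hsx (R.concat hys), ?_, ?_, ?_⟩
  · rw [Walk.cons_isCycle_iff]
    refine ⟨isPath_concat hR hys hs, ?_⟩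
    rw [Walk.edges_concat, List.concat_eq_append, List.mem_append]
    rintro (he | he)
    · exact hs (R.fst_mem_support_of_mem_edges he)
    · simp only [List.mem_singleton, Sym2.eq_iff] at he
      rcases he with ⟨rfl, rfl⟩ | ⟨-, rfl⟩
      · exact hys.ne rfl
      · exact hxy rfl
  · simp [Walk.length_concat]
  · intro z hz
    simp only [Walk.support_cons, Walk.support_concat, List.concat_eq_append,
      List.mem_cons, List.mem_append, List.mem_singleton, List.not_mem_nil, or_false] at hz
    tauto

/-- attach a path via two distinct vertices `s`, `t` both adjacent to a new vertex `z`,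
making a cycle -/
lemma cycle_two_attach {x y s t z : V'} (R : G.Walk x y) (hR : R.IsPath)
    (hs : s ∉ R.support) (ht : t ∉ R.support) (hz : z ∉ R.support)
    (hst : s ≠ t) (hsz : s ≠ z) (htz : t ≠ z)
    (hzs : G.Adj z s) (hsx : G.Adj s x) (hyt : G.Adj y t) (htz' : G.Adj t z) :
    ∃ C : G.Walk z z, C.IsCycle ∧ C.length = R.length + 4 ∧
      ∀ w ∈ C.support, w = z ∨ w = s ∨ w = t ∨ w ∈ R.support := by
  have hPpath : (Walk.cons hsx (R.concat hyt)).IsPath := by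
    refine (isPath_concat hR hyt ht).cons ?_
    simp only [Walk.support_concat, List.concat_eq_append, List.mem_append,
      List.mem_singleton] 
    rintro (h | rfl)
    · exact hs h
    · exact hst rfl
  have hzP : z ∉ (Walk.cons hsx (R.concat hyt)).support := by
    simp only [Walk.support_cons, Walk.support_concat, List.concat_eq_append,
      List.mem_cons, List.mem_append, List.mem_singleton, List.not_mem_nil, or_false]
    rintro (rfl | h | rfl)
    · exact hsz rfl
    · exact hz h
    · exact htz rfl
  refine ⟨Walk.cons hzs (((Walk.cons hsx (R.concat hyt))).concat htz'), ?_, ?_, ?_⟩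
  · rw [Walk.cons_isCycle_iff]
    refine ⟨isPath_concat hPpath htz' hzP, ?_⟩
    rw [Walk.edges_concat, List.concat_eq_append, List.mem_append, Walk.edges_cons,
      List.mem_cons, Walk.edges_concat, List.concat_eq_append, List.mem_append]
    rintro ((he | he | he) | he)
    · rw [Sym2.eq_iff] at he
      rcases he with ⟨rfl, rfl⟩ | ⟨rfl, -⟩
      · exact hsz rfl
      · exact hz R.start_mem_support
    · exact hz (R.fst_mem_support_of_mem_edges he)
    · simp only [List.mem_singleton, Sym2.eq_iff] at he
      rcases he with ⟨rfl, rfl⟩ | ⟨rfl, rfl⟩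
      · exact hst rfl
      · exact htz rfl
    · simp only [List.mem_singleton, Sym2.eq_iff] at he
      rcases he with ⟨rfl, rfl⟩ | ⟨-, rfl⟩
      · exact htz rfl
      · exact hst rfl
  · simp only [Walk.length_cons, Walk.length_concat]
  · intro w hw
    simp only [Walk.support_cons, Walk.support_concat, List.concat_eq_append,
      List.mem_cons, List.mem_append, List.mem_singleton, List.not_mem_nil, or_false] at hw
    tauto

variable {H : SimpleGraph V} {v : V} {f : {w : V // w ≠ v} → V'}

/-- lift a walk of `H` avoiding `v` to the comap graph -/
lemma lift_comap (H : SimpleGraph V) (v : V) :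
    ∀ {a b : V} (p : H.Walk a b) (_ : ∀ w ∈ p.support, w ≠ v) (ha : a ≠ v) (hb : b ≠ v),
      ∃ q : (H.comap (Subtype.val : {w : V // w ≠ v} → V)).Walk ⟨a, ha⟩ ⟨b, hb⟩,
        q.map ⟨Subtype.val, fun hadj => hadj⟩ = p := by
  intro a b p
  induction p with
  | nil => exact fun _ _ _ => ⟨Walk.nil, rfl⟩
  | @cons a c b hadj p ih =>
    intro h ha hb
    have hc : c ≠ v := h c (by simp)
    obtain ⟨q, hq⟩ := ih (fun w hw => h w (by simp [hw])) hc hb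
    refine ⟨Walk.cons (by exact hadj) q, ?_⟩
    rw [← hq]; rfl

lemma lift_path (hfinj : Function.Injective f)
    (hadjf : ∀ a b, G.Adj (f a) (f b) ↔ H.Adj a.1 b.1)
    {a b : V} (p : H.Walk a b) (h : ∀ w ∈ p.support, w ≠ v) (ha : a ≠ v) (hb : b ≠ v) :
    ∃ C : G.Walk (f ⟨a, ha⟩) (f ⟨b, hb⟩),
      C.length = p.length ∧
      (∀ x, x ∈ C.support ↔ ∃ w, ∃ hw : w ≠ v, w ∈ p.support ∧ f ⟨w, hw⟩ = x) ∧
      (p.IsPath → C.IsPath) := by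
  obtain ⟨q, hq⟩ := lift_comap H v p h ha hb
  let F : (H.comap (Subtype.val : {w : V // w ≠ v} → V)) →g G :=
    ⟨f, fun hab => (hadjf _ _).2 hab⟩
  refine ⟨q.map F, ?_, ?_, ?_⟩
  · rw [Walk.length_map, ← hq, Walk.length_map]
  · intro x
    rw [Walk.support_map]
    constructor
    · intro hx
      obtain ⟨s, hs, hfs⟩ := List.mem_map.mp hx
      refine ⟨s.1, s.2, ?_, ?_⟩
      · rw [← hq, Walk.support_map]
        exact List.mem_map.mpr ⟨s, hs, rfl⟩
      · exact hfs
    · rintro ⟨w, hw, hmem, rfl⟩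
      rw [← hq, Walk.support_map] at hmem
      obtain ⟨s, hs, hval⟩ := List.mem_map.mp hmem
      have : s = ⟨w, hw⟩ := Subtype.ext hval
      exact List.mem_map.mpr ⟨s, hs, by subst this; rfl⟩
  · intro hp
    have hqp : q.IsPath := by
      rw [← Walk.map_isPath_iff_of_injective
        (f := (⟨Subtype.val, fun hadj => hadj⟩ : (H.comap (Subtype.val : {w : V // w ≠ v} → V)) →g H))
        Subtype.val_injective, hq]
      exact hp
    exact Walk.map_isPath_of_injective hfinj hqp

lemma lift_cycle (hfinj : Function.Injective f)
    (hadjf : ∀ a b, G.Adj (f a) (f b) ↔ H.Adj a.1 b.1)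
    {u : V} (Q : H.Walk u u) (hQ : Q.IsCycle)
    (h : ∀ w ∈ Q.support, w ≠ v) (hu : u ≠ v) :
    ∃ C : G.Walk (f ⟨u, hu⟩) (f ⟨u, hu⟩), C.IsCycle ∧ C.length = Q.length ∧
      (∀ x, x ∈ C.support ↔ ∃ w, ∃ hw : w ≠ v, w ∈ Q.support ∧ f ⟨w, hw⟩ = x) := by
  obtain ⟨q, hq⟩ := lift_comap H v Q h hu hu
  let F : (H.comap (Subtype.val : {w : V // w ≠ v} → V)) →g G :=
    ⟨f, fun hab => (hadjf _ _).2 hab⟩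
  have hqc : q.IsCycle := by
    rw [← Walk.map_isCycle_iff_of_injective
      (f := (⟨Subtype.val, fun hadj => hadj⟩ : (H.comap (Subtype.val : {w : V // w ≠ v} → V)) →g H))
      Subtype.val_injective, hq]
    exact hQ
  refine ⟨q.map F, hqc.map hfinj, ?_, ?_⟩
  · rw [Walk.length_map, ← hq, Walk.length_map]
  · intro x
    rw [Walk.support_map]
    constructor
    · intro hx
      obtain ⟨s, hs, hfs⟩ := List.mem_map.mp hx
      refine ⟨s.1, s.2, ?_, hfs⟩
      rw [← hq, Walk.support_map]
      exact List.mem_map.mpr ⟨s, hs, rfl⟩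
    · rintro ⟨w, hw, hmem, rfl⟩
      rw [← hq, Walk.support_map] at hmem
      obtain ⟨s, hs, hval⟩ := List.mem_map.mp hmem
      have : s = ⟨w, hw⟩ := Subtype.ext hval
      exact List.mem_map.mpr ⟨s, hs, by subst this; rfl⟩

set_option maxHeartbeats 1000000 in
lemma lift_cycle_through {v₀ v₁ v₂ : V'}
    (h01 : v₀ ≠ v₁) (h02 : v₀ ≠ v₂) (h12 : v₁ ≠ v₂)
    (hfinj : Function.Injective f)
    (hfne : ∀ a, f a ≠ v₀ ∧ f a ≠ v₁ ∧ f a ≠ v₂)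
    (hadjf : ∀ a b, G.Adj (f a) (f b) ↔ H.Adj a.1 b.1)
    (hvadj : ∀ a, (G.Adj (f a) v₁ ∨ G.Adj (f a) v₂) ↔ H.Adj a.1 v)
    (h0 : ∀ x : V', G.Adj x v₀ ↔ (x = v₁ ∨ x = v₂))
    {u : V} (Q : H.Walk u u) (hQ : Q.IsCycle) (hv : v ∈ Q.support) :
    ∃ (u' : V') (C : G.Walk u' u'), C.IsCycle ∧
      (C.length = Q.length ∨ C.length = Q.length + 2) ∧
      ∀ x ∈ C.support, (x = v₀ ∨ x = v₁ ∨ x = v₂) ∨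
        ∃ w, ∃ hw : w ≠ v, w ∈ Q.support ∧ f ⟨w, hw⟩ = x := by
  classical
  have hQ' : (Q.rotate v hv).IsCycle := hQ.rotate hv
  have hQ'len : (Q.rotate v hv).length = Q.length := length_rotate' Q hv
  have hQ'sup : ∀ y, y ∈ (Q.rotate v hv).support ↔ y ∈ Q.support :=
    fun y => mem_support_rotate Q hQ hv
  obtain ⟨w, hvw, p, hpeq⟩ := Walk.not_nil_iff.mp hQ'.not_nil
  have hcyc : (Walk.cons hvw p).IsCycle := hpeq ▸ hQ'
  have hppath : p.IsPath := ((Walk.cons_isCycle_iff p hvw).mp hcyc).1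
  have hw_ne : w ≠ v := hvw.ne'
  have hpnil : ¬ p.reverse.Nil := Walk.not_nil_of_ne (hvw.ne').symm
  obtain ⟨c, hvc, r0, hprev⟩ := Walk.not_nil_iff.mp hpnil
  have hc_ne : c ≠ v := hvc.ne'
  have hp2 : p = r0.reverse.concat hvc.symm := by
    rw [← p.reverse_reverse, hprev, Walk.reverse_cons, Walk.concat_eq_append]
  set ri := r0.reverse with hri_def
  have hps : p.support = ri.support ++ [v] := by
    rw [hp2, Walk.support_concat]

  have hnd : (ri.support ++ [v]).Nodup := hps ▸ hppath.support_nodup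
  have hvnotri : v ∉ ri.support := by
    intro hmem
    exact (List.disjoint_of_nodup_append hnd) hmem (by simp)
  have hripath : ri.IsPath := Walk.IsPath.mk' (List.Nodup.of_append_left hnd)
  have hri_ne : ∀ w' ∈ ri.support, w' ≠ v := fun w' hw' => fun heq => hvnotri (heq ▸ hw')
  have hriQ : ∀ w' ∈ ri.support, w' ∈ Q.support := by
    intro w' hw'
    rw [← hQ'sup, hpeq, Walk.support_cons]
    exact List.mem_cons_of_mem _ (hps ▸ List.mem_append_left _ hw')
  have hlenri : Q.length = ri.length + 2 := by
    rw [← hQ'len, hpeq, Walk.length_cons, hp2, Walk.length_concat]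
  have hwc : w ≠ c := by
    intro heq
    subst heq
    have h0' : ri.length = 0 := isPath_nil_of_closed hripath
    have := hQ'.three_le_length
    omega
  obtain ⟨R, hRlen, hRsup, hRpath⟩ :=
    lift_path (f := f) hfinj hadjf ri hri_ne hw_ne hc_ne
  have hR : R.IsPath := hRpath hripath
  have hfwfc : f ⟨w, hw_ne⟩ ≠ f ⟨c, hc_ne⟩ := by
    intro heq
    exact hwc (congrArg Subtype.val (hfinj heq))
  have hRtrio : ∀ x ∈ R.support, x ≠ v₀ ∧ x ≠ v₁ ∧ x ≠ v₂ := by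
    intro x hx
    obtain ⟨w', hw', -, rfl⟩ := (hRsup x).mp hx
    exact hfne _
  have hadjw : G.Adj (f ⟨w, hw_ne⟩) v₁ ∨ G.Adj (f ⟨w, hw_ne⟩) v₂ :=
    (hvadj ⟨w, hw_ne⟩).mpr hvw.symm
  have hadjc : G.Adj (f ⟨c, hc_ne⟩) v₁ ∨ G.Adj (f ⟨c, hc_ne⟩) v₂ :=
    (hvadj ⟨c, hc_ne⟩).mpr hvc.symm
  have hsupR : ∀ x ∈ R.support,
      ∃ w', ∃ hw' : w' ≠ v, w' ∈ Q.support ∧ f ⟨w', hw'⟩ = x := by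
    intro x hx
    obtain ⟨w', hw', hmem, rfl⟩ := (hRsup x).mp hx
    exact ⟨w', hw', hriQ w' hmem, rfl⟩
  -- same-side construction
  have same : ∀ s : V', (s = v₁ ∨ s = v₂) →
      G.Adj (f ⟨w, hw_ne⟩) s → G.Adj (f ⟨c, hc_ne⟩) s →
      ∃ (u' : V') (C : G.Walk u' u'), C.IsCycle ∧
        (C.length = Q.length ∨ C.length = Q.length + 2) ∧
        ∀ x ∈ C.support, (x = v₀ ∨ x = v₁ ∨ x = v₂) ∨
          ∃ w', ∃ hw' : w' ≠ v, w' ∈ Q.support ∧ f ⟨w', hw'⟩ = x := by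
    intro s hs hws hcs
    have hsnot : s ∉ R.support := by
      intro hmem
      rcases hs with rfl | rfl
      · exact (hRtrio s hmem).2.1 rfl
      · exact (hRtrio s hmem).2.2 rfl
    obtain ⟨C, hCcyc, hClen, hCsup⟩ :=
      cycle_one_attach R hR hfwfc hsnot hws.symm hcs
    refine ⟨s, C, hCcyc, Or.inl (by omega), ?_⟩
    intro x hx
    rcases hCsup x hx with rfl | hmem
    · rcases hs with rfl | rfl
      · exact Or.inl (Or.inr (Or.inl rfl))
      · exact Or.inl (Or.inr (Or.inr rfl))
    · exact Or.inr (hsupR x hmem)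
  -- mixed-side construction
  have mixed : ∀ s t : V', s ≠ t → (s = v₁ ∨ s = v₂) → (t = v₁ ∨ t = v₂) →
      G.Adj (f ⟨w, hw_ne⟩) s → G.Adj (f ⟨c, hc_ne⟩) t →
      ∃ (u' : V') (C : G.Walk u' u'), C.IsCycle ∧
        (C.length = Q.length ∨ C.length = Q.length + 2) ∧
        ∀ x ∈ C.support, (x = v₀ ∨ x = v₁ ∨ x = v₂) ∨
          ∃ w', ∃ hw' : w' ≠ v, w' ∈ Q.support ∧ f ⟨w', hw'⟩ = x := by
    intro s t hst hs ht hws hct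
    have hsnot : s ∉ R.support := by
      intro hmem
      rcases hs with rfl | rfl
      · exact (hRtrio s hmem).2.1 rfl
      · exact (hRtrio s hmem).2.2 rfl
    have htnot : t ∉ R.support := by
      intro hmem
      rcases ht with rfl | rfl
      · exact (hRtrio t hmem).2.1 rfl
      · exact (hRtrio t hmem).2.2 rfl
    have h0not : v₀ ∉ R.support := fun hmem => (hRtrio v₀ hmem).1 rfl
    have hs0 : s ≠ v₀ := by rcases hs with rfl | rfl; exacts [h01.symm, h02.symm]
    have ht0 : t ≠ v₀ := by rcases ht with rfl | rfl; exacts [h01.symm, h02.symm]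
    have h0s : G.Adj v₀ s := ((h0 s).mpr hs).symm
    have ht0' : G.Adj t v₀ := (h0 t).mpr ht
    obtain ⟨C, hCcyc, hClen, hCsup⟩ :=
      cycle_two_attach R hR hsnot htnot h0not hst hs0 ht0 h0s hws.symm hct ht0'
    refine ⟨v₀, C, hCcyc, Or.inr (by omega), ?_⟩
    intro x hx
    rcases hCsup x hx with rfl | rfl | rfl | hmem
    · exact Or.inl (Or.inl rfl)
    · exact Or.inl (by tauto)
    · exact Or.inl (by tauto)
    · exact Or.inr (hsupR x hmem)
  rcases hadjw with hw1 | hw2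
  · rcases hadjc with hc1 | hc2
    · exact same v₁ (Or.inl rfl) hw1 hc1
    · exact mixed v₁ v₂ h12 (Or.inl rfl) (Or.inr rfl) hw1 hc2
  · rcases hadjc with hc1 | hc2
    · exact mixed v₂ v₁ h12.symm (Or.inr rfl) (Or.inl rfl) hw2 hc1
    · exact same v₂ (Or.inr rfl) hw2 hc2

end BisplitAux

/-- If `G` is obtained from `H` by bisplitting a vertex of degree four
or more and `H` contains a mixed bicycle, then so does `G`. -/
theorem bisplit_preserves_mixedBicycle {V' : Type*} (H : SimpleGraph V)
    (G : SimpleGraph V') (hsplit : BisplitOf G H) (hmb : HasMixedBicycle H) :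
    HasMixedBicycle G := by
  obtain ⟨v, v₀, v₁, v₂, f, h01, h02, h12, hfinj, hfne, -, -, hadjf, hvadj, -, h0, -, -, -⟩ :=
    hsplit
  obtain ⟨u, u', Qo, Qe, hco, hce, hodd, heven, hlen4, hdisj⟩ := hmb
  have lift : ∀ {u : V} (Q : H.Walk u u), Q.IsCycle →
      ∃ (u' : V') (C : G.Walk u' u'), C.IsCycle ∧
        (C.length = Q.length ∨ C.length = Q.length + 2) ∧
        (∀ x ∈ C.support, (x = v₀ ∨ x = v₁ ∨ x = v₂) ∨
          ∃ w, ∃ hw : w ≠ v, w ∈ Q.support ∧ f ⟨w, hw⟩ = x) ∧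
        (v ∉ Q.support → ∀ x ∈ C.support,
          ∃ w, ∃ hw : w ≠ v, w ∈ Q.support ∧ f ⟨w, hw⟩ = x) := by
    intro u Q hQ
    by_cases hv : v ∈ Q.support
    · obtain ⟨u'', C, hC, hClen, hCsup⟩ :=
        BisplitAux.lift_cycle_through h01 h02 h12 hfinj hfne hadjf hvadj h0 Q hQ hv
      exact ⟨u'', C, hC, hClen, hCsup, fun hnv => absurd hv hnv⟩
    · have hall : ∀ w ∈ Q.support, w ≠ v := fun w hw heq => hv (heq ▸ hw)
      have hu : u ≠ v := hall u Q.start_mem_support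
      obtain ⟨C, hC, hClen, hCsup⟩ := BisplitAux.lift_cycle hfinj hadjf Q hQ hall hu
      exact ⟨_, C, hC, Or.inl hClen,
        fun x hx => Or.inr ((hCsup x).mp hx), fun _ x hx => (hCsup x).mp hx⟩
  obtain ⟨uo, Co, hCo, hColen, hCosup, hCoav⟩ := lift Qo hco
  obtain ⟨ue, Ce, hCe, hCelen, hCesup, hCeav⟩ := lift Qe hce
  refine ⟨uo, ue, Co, Ce, hCo, hCe, ?_, ?_, ?_, ?_⟩
  · obtain ⟨k, hk⟩ := hodd
    rcases hColen with h | h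
    · refine ⟨k, ?_⟩; omega
    · refine ⟨k + 1, ?_⟩; omega
  · obtain ⟨k, hk⟩ := heven
    rcases hCelen with h | h
    · refine ⟨k, ?_⟩; omega
    · refine ⟨k + 1, ?_⟩; omega
  · rcases hCelen with h | h <;> omega
  · intro x hxo hxe
    have key : ∀ w₁, ∀ hw₁ : w₁ ≠ v, w₁ ∈ Qo.support → f ⟨w₁, hw₁⟩ = x →
        ∀ w₂, ∀ hw₂ : w₂ ≠ v, w₂ ∈ Qe.support → f ⟨w₂, hw₂⟩ = x → False := by
      rintro w₁ hw₁ hm₁ rfl w₂ hw₂ hm₂ heq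
      have : w₂ = w₁ := congrArg Subtype.val (hfinj heq)
      exact hdisj w₁ hm₁ (this ▸ hm₂)
    by_cases hvo : v ∈ Qo.support
    · have hve : v ∉ Qe.support := hdisj v hvo
      obtain ⟨w₂, hw₂, hm₂, heq₂⟩ := hCeav hve x hxe
      rcases hCosup x hxo with (h | h | h) | ⟨w₁, hw₁, hm₁, heq₁⟩
      · exact (hfne ⟨w₂, hw₂⟩).1 (heq₂.trans h)
      · exact (hfne ⟨w₂, hw₂⟩).2.1 (heq₂.trans h)
      · exact (hfne ⟨w₂, hw₂⟩).2.2 (heq₂.trans h)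
      · exact key w₁ hw₁ hm₁ heq₁ w₂ hw₂ hm₂ heq₂
    · obtain ⟨w₁, hw₁, hm₁, heq₁⟩ := hCoav hvo x hxo
      rcases hCesup x hxe with (h | h | h) | ⟨w₂, hw₂, hm₂, heq₂⟩
      · exact (hfne ⟨w₁, hw₁⟩).1 (heq₁.trans h)
      · exact (hfne ⟨w₁, hw₁⟩).2.1 (heq₁.trans h)
      · exact (hfne ⟨w₁, hw₁⟩).2.2 (heq₁.trans h)
      · exact key w₁ hw₁ hm₁ heq₁ w₂ hw₂ hm₂ heq₂
end

section
/- Let G be a graph and let x_0 be a vertex of degree two having two distinct neighbors, and let J′ = G/x_0 be the bicontraction of x_0. If J′ has an osculating bicycle (Q, Q′) such that neither Q nor Q′ is a cycle of G, then the union Q ∪ Q′ corresponds to an x_0-isolating even cycle in G. -/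
open SimpleGraph

variable {V : Type*}

/-- A cycle in a multigraph presented by an incidence map `inc : E → Sym2 V'`:
a cyclic sequence of `n ≥ 2` pairwise distinct vertices and pairwise distinct edges,
consecutive vertices being joined by the corresponding edge.  (Cycles of length two,
arising from a pair of parallel edges, are allowed.) -/
structure MultiCycle {V' E : Type*} (inc : E → Sym2 V') where
  n : ℕ
  two_le : 2 ≤ n
  vert : ZMod n → V'
  edge : ZMod n → E
  vert_inj : Function.Injective vert
  edge_inj : Function.Injective edge
  inc_edge : ∀ i : ZMod n, inc (edge i) = s(vert i, vert (i + 1))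

/-- The vertex map of the bicontraction `G/x₀` (where `x₀` has neighbors `x₁, x₂`):
the three vertices `x₀, x₁, x₂` are identified into the contraction vertex `none`,
and every other vertex is sent to itself. -/
def contrProj [DecidableEq V] (x₀ x₁ x₂ : V) (v : V) :
    Option {w : V // w ≠ x₀ ∧ w ≠ x₁ ∧ w ≠ x₂} :=
  if h : v = x₀ ∨ v = x₁ ∨ v = x₂ then none else some ⟨v, by tauto⟩

/-- The edges of the bicontraction `J' = G/x₀`: all edges of `G` not incident with `x₀`
and distinct from `x₁x₂` (the contracted and loop edges are discarded);
each of them corresponds to an edge of `G`. -/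
def contrEdges [DecidableEq V] (G : SimpleGraph V) (x₀ x₁ x₂ : V) :=
  {e : Sym2 V // e ∈ G.edgeSet ∧ x₀ ∉ e ∧ e ≠ s(x₁, x₂)}

/-- The incidence map of the bicontraction `J' = G/x₀`. -/
def contrInc [DecidableEq V] (G : SimpleGraph V) (x₀ x₁ x₂ : V)
    (e : contrEdges G x₀ x₁ x₂) : Sym2 (Option {w : V // w ≠ x₀ ∧ w ≠ x₁ ∧ w ≠ x₂}) :=
  (e.1).map (contrProj x₀ x₁ x₂)

/-- A cycle of the bicontraction "is a cycle of `G`": the corresponding set of edges of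
`G` is the edge set of a cycle of `G`. -/
def IsCycleOfG [DecidableEq V] (G : SimpleGraph V) {x₀ x₁ x₂ : V}
    (Q : MultiCycle (contrInc G x₀ x₁ x₂)) : Prop :=
  ∃ (u : V) (C : G.Walk u u), C.IsCycle ∧
    ∀ e : Sym2 V, e ∈ C.edges ↔ ∃ i, (Q.edge i).1 = e


section
variable [DecidableEq V] {x₀ x₁ x₂ : V}

theorem contrProj_eq_none {v : V} :
    contrProj x₀ x₁ x₂ v = none ↔ (v = x₀ ∨ v = x₁ ∨ v = x₂) := by
  unfold contrProj
  split <;> simp_all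

theorem contrProj_eq_some {v : V} {w : {w : V // w ≠ x₀ ∧ w ≠ x₁ ∧ w ≠ x₂}} :
    contrProj x₀ x₁ x₂ v = some w ↔ v = w.1 := by
  constructor
  · intro h
    unfold contrProj at h
    split at h
    · exact absurd h (by simp)
    · exact congrArg Subtype.val (Option.some.inj h)
  · rintro rfl
    unfold contrProj
    split
    next h => exact absurd h (by simpa using w.2)
    next h => simp

theorem edge_val_of_inc_some_some {G : SimpleGraph V} (e : contrEdges G x₀ x₁ x₂)
    {w w' : {w : V // w ≠ x₀ ∧ w ≠ x₁ ∧ w ≠ x₂}}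
    (h : contrInc G x₀ x₁ x₂ e = s(some w, some w')) : e.1 = s(w.1, w'.1) := by
  obtain ⟨e, he⟩ := e
  induction e using Sym2.ind with
  | _ p q =>
    simp only [contrInc, Sym2.map_pair_eq] at h
    rw [Sym2.eq_iff] at h
    rcases h with ⟨h1, h2⟩ | ⟨h1, h2⟩
    · rw [contrProj_eq_some] at h1 h2
      simp only [h1, h2]
    · rw [contrProj_eq_some] at h1 h2
      simp only [h1, h2, Sym2.eq_swap]

theorem edge_val_of_inc_none_some {G : SimpleGraph V} (e : contrEdges G x₀ x₁ x₂)
    {w : {w : V // w ≠ x₀ ∧ w ≠ x₁ ∧ w ≠ x₂}}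
    (h : contrInc G x₀ x₁ x₂ e = s(none, some w)) :
    ∃ a, (a = x₁ ∨ a = x₂) ∧ e.1 = s(a, w.1) := by
  obtain ⟨e, he⟩ := e
  have hx₀ : x₀ ∉ e := he.2.1
  revert hx₀
  induction e using Sym2.ind with
  | _ p q =>
    intro hx₀
    simp only [contrInc, Sym2.map_pair_eq] at h
    rw [Sym2.eq_iff] at h
    simp only [Sym2.mem_iff] at hx₀
    push_neg at hx₀
    rcases h with ⟨h1, h2⟩ | ⟨h1, h2⟩
    · rw [contrProj_eq_none] at h1
      rw [contrProj_eq_some] at h2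
      refine ⟨p, ?_, by simp only [h2]⟩
      rcases h1 with h | h | h
      · exact absurd h (Ne.symm hx₀.1)
      · exact Or.inl h
      · exact Or.inr h
    · rw [contrProj_eq_none] at h2
      rw [contrProj_eq_some] at h1
      refine ⟨q, ?_, by simp only [h1, Sym2.eq_swap]⟩
      rcases h2 with h | h | h
      · exact absurd h (Ne.symm hx₀.2)
      · exact Or.inl h
      · exact Or.inr h
end


def walkOfFn (G : SimpleGraph V) (f : ℕ → V) :
    (m : ℕ) → (∀ j, j < m → G.Adj (f j) (f (j+1))) → G.Walk (f 0) (f m)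
  | 0, _ => Walk.nil
  | (m+1), h => (walkOfFn G f m (fun j hj => h j (Nat.lt_succ_of_lt hj))).concat
      (h m (Nat.lt_succ_self m))

theorem support_walkOfFn (G : SimpleGraph V) (f : ℕ → V) (m : ℕ)
    (h : ∀ j, j < m → G.Adj (f j) (f (j+1))) :
    (walkOfFn G f m h).support = (List.range (m+1)).map f := by
  induction m with
  | zero => simp [walkOfFn, List.range_succ]
  | succ m ih =>
    rw [walkOfFn, Walk.support_concat, ih, List.range_succ (n := m + 1)]
    simp

theorem edges_walkOfFn (G : SimpleGraph V) (f : ℕ → V) (m : ℕ)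
    (h : ∀ j, j < m → G.Adj (f j) (f (j+1))) :
    (walkOfFn G f m h).edges = (List.range m).map (fun j => s(f j, f (j+1))) := by
  induction m with
  | zero => simp [walkOfFn]
  | succ m ih =>
    rw [walkOfFn, Walk.edges_concat, ih, List.range_succ (n := m)]
    simp

theorem length_walkOfFn (G : SimpleGraph V) (f : ℕ → V) (m : ℕ)
    (h : ∀ j, j < m → G.Adj (f j) (f (j+1))) :
    (walkOfFn G f m h).length = m := by
  induction m with
  | zero => simp [walkOfFn]
  | succ m ih => rw [walkOfFn, Walk.length_concat, ih]

theorem walkOfFn_isCycle (G : SimpleGraph V) (f : ℕ → V) (m : ℕ) (hm : 3 ≤ m)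
    (hadj : ∀ j, j < m → G.Adj (f j) (f (j+1)))
    (hinj : ∀ j k, j < m → k < m → f j = f k → j = k)
    (hE : ((List.range m).map fun j => s(f j, f (j+1))).Nodup)
    (hclose : f m = f 0) :
    ∃ C : G.Walk (f 0) (f 0), C.IsCycle ∧ C.length = m ∧
      C.edges = (List.range m).map (fun j => s(f j, f (j+1))) ∧
      C.support = (List.range (m+1)).map f := by
  refine ⟨(walkOfFn G f m hadj).copy rfl hclose, ?_, ?_, ?_, ?_⟩
  · constructor
    · constructor
      · constructor
        rw [Walk.edges_copy, edges_walkOfFn]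
        exact hE
      · intro hnil
        have := congrArg Walk.length hnil
        rw [Walk.length_copy, length_walkOfFn] at this
        simp at this
        omega
    · rw [Walk.support_copy, support_walkOfFn]
      rw [List.range_succ_eq_map]
      rw [List.map_cons, List.tail_cons, List.map_map]
      refine List.Nodup.map_on ?_ (List.nodup_range)
      intro j hj k hk hfk
      simp only [List.mem_range] at hj hk
      simp only [Function.comp, Nat.succ_eq_add_one] at hfk
      rcases Nat.lt_or_ge (j+1) m with hj1 | hj1
      · rcases Nat.lt_or_ge (k+1) m with hk1 | hk1
        · exact Nat.succ_injective (hinj _ _ hj1 hk1 hfk)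
        · have hk1 : k + 1 = m := by omega
          rw [hk1, hclose] at hfk
          have := hinj _ _ hj1 (by omega) hfk
          omega
      · have hj1 : j + 1 = m := by omega
        rcases Nat.lt_or_ge (k+1) m with hk1 | hk1
        · rw [hj1, hclose] at hfk
          have := hinj _ _ (by omega) hk1 hfk
          omega
        · omega
  · rw [Walk.length_copy, length_walkOfFn]
  · rw [Walk.edges_copy, edges_walkOfFn]
  · rw [Walk.support_copy, support_walkOfFn]
section
variable [DecidableEq V] {G : SimpleGraph V} {x₀ x₁ x₂ : V}

def liftO (x₀ : V) {P : V → Prop} (o : Option {w : V // P w}) : V := o.elim x₀ Subtype.val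

theorem mk_isCycleOfG (Q : MultiCycle (contrInc G x₀ x₁ x₂)) (f : ℕ → V)
    (σ : ℕ → ZMod Q.n) (h3 : 3 ≤ Q.n)
    (hσinj : ∀ j k, j < Q.n → k < Q.n → σ j = σ k → j = k)
    (hσsurj : ∀ i, ∃ j, j < Q.n ∧ σ j = i)
    (hfe : ∀ j, j < Q.n → (Q.edge (σ j)).1 = s(f j, f (j+1)))
    (hinj : ∀ j k, j < Q.n → k < Q.n → f j = f k → j = k)
    (hclose : f Q.n = f 0) : IsCycleOfG G Q := by
  have hadj : ∀ j, j < Q.n → G.Adj (f j) (f (j+1)) := fun j hj => by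
    rw [← SimpleGraph.mem_edgeSet, ← hfe j hj]; exact (Q.edge (σ j)).2.1
  have hmapeq : (List.range Q.n).map (fun j => s(f j, f (j+1)))
      = (List.range Q.n).map (fun j => (Q.edge (σ j)).1) :=
    List.map_congr_left (fun j hj => (hfe j (List.mem_range.mp hj)).symm)
  have hE : ((List.range Q.n).map fun j => s(f j, f (j+1))).Nodup := by
    rw [hmapeq]
    refine List.Nodup.map_on ?_ (List.nodup_range)
    intro j hj k hk hjk
    exact hσinj _ _ (List.mem_range.mp hj) (List.mem_range.mp hk)
      (Q.edge_inj (Subtype.ext hjk))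
  obtain ⟨C, hC, hlen, hedges, hsupp⟩ := walkOfFn_isCycle G f Q.n h3 hadj hinj hE hclose
  refine ⟨f 0, C, hC, fun e => ?_⟩
  rw [hedges, hmapeq, List.mem_map]
  constructor
  · rintro ⟨j, hj, rfl⟩
    exact ⟨σ j, rfl⟩
  · rintro ⟨i, rfl⟩
    obtain ⟨j, hj, hji⟩ := hσsurj i
    exact ⟨j, List.mem_range.mpr hj, by rw [hji]⟩

structure CycData (G : SimpleGraph V) (x₀ x₁ x₂ : V)
    (Q : MultiCycle (contrInc G x₀ x₁ x₂)) (a b : V) where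
  f : ℕ → V
  E : ℕ → ZMod Q.n
  Einj : ∀ j k, j < Q.n → k < Q.n → E j = E k → j = k
  Esurj : ∀ i, ∃ j, j < Q.n ∧ E j = i
  f0 : f 0 = a
  fn : ∀ j, Q.n ≤ j → f j = b
  fedge : ∀ j, j < Q.n → (Q.edge (E j)).1 = s(f j, f (j+1))
  fmem : ∀ j, 0 < j → j < Q.n →
    (f j ≠ x₀ ∧ f j ≠ x₁ ∧ f j ≠ x₂) ∧ contrProj x₀ x₁ x₂ (f j) ∈ Set.range Q.vert
  finj : ∀ j k, 0 < j → j < Q.n → 0 < k → k < Q.n → f j = f k → j = k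

def CycData.rev {Q : MultiCycle (contrInc G x₀ x₁ x₂)} {a b : V}
    (D : CycData G x₀ x₁ x₂ Q a b) : CycData G x₀ x₁ x₂ Q b a where
  f := fun j => D.f (Q.n - j)
  E := fun j => D.E (Q.n - 1 - j)
  Einj := fun j k hj hk h => by
    have h2 := Q.two_le; have := D.Einj _ _ (by omega) (by omega) h; omega
  Esurj := fun i => by
    obtain ⟨j, hj, hji⟩ := D.Esurj i
    refine ⟨Q.n - 1 - j, by omega, ?_⟩
    show D.E (Q.n - 1 - (Q.n - 1 - j)) = i
    rw [show Q.n - 1 - (Q.n - 1 - j) = j by omega, hji]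
  f0 := by simpa using D.fn Q.n le_rfl
  fn := fun j hj => by
    show D.f (Q.n - j) = a
    rw [show Q.n - j = 0 by omega]; exact D.f0
  fedge := fun j hj => by
    have h2 := Q.two_le
    show (Q.edge (D.E (Q.n - 1 - j))).1 = s(D.f (Q.n - j), D.f (Q.n - (j + 1)))
    have h := D.fedge (Q.n - 1 - j) (by omega)
    rw [h, show Q.n - 1 - j + 1 = Q.n - j by omega,
      show Q.n - (j + 1) = Q.n - 1 - j by omega, Sym2.eq_swap]
  fmem := fun j h0 hj => by
    have h2 := Q.two_le
    exact D.fmem (Q.n - j) (by omega) (by omega)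
  finj := fun j k hj0 hj hk0 hk h => by
    have h2 := Q.two_le
    have := D.finj _ _ (by omega) (by omega) (by omega) (by omega) h; omega
end
section
variable [DecidableEq V] {G : SimpleGraph V} {x₀ x₁ x₂ : V}

theorem exists_cycData (Q : MultiCycle (contrInc G x₀ x₁ x₂)) (hQ : ¬ IsCycleOfG G Q) :
    ∃ a b : V, a ≠ b ∧ (a = x₁ ∨ a = x₂) ∧ (b = x₁ ∨ b = x₂) ∧
      none ∈ Set.range Q.vert ∧ Nonempty (CycData G x₀ x₁ x₂ Q a b) := by
  have h2 := Q.two_le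
  haveI : NeZero Q.n := ⟨by omega⟩
  haveI : Fact (1 < Q.n) := ⟨h2⟩
  have hcast : ∀ j k : ℕ, j < Q.n → k < Q.n → (j : ZMod Q.n) = (k : ZMod Q.n) → j = k := by
    intro j k hj hk h
    have := congrArg ZMod.val h
    rwa [ZMod.val_cast_of_lt hj, ZMod.val_cast_of_lt hk] at this
  have hsurj : ∀ i : ZMod Q.n, ∃ j, j < Q.n ∧ (j : ZMod Q.n) = i :=
    fun i => ⟨i.val, ZMod.val_lt i, ZMod.natCast_rightInverse i⟩
  by_cases hex : ∃ i, Q.vert i = none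
  case neg =>
    exfalso
    apply hQ
    push_neg at hex
    have hsome : ∀ i, ∃ w, Q.vert i = some w := by
      intro i
      rcases h : Q.vert i with _ | w
      · exact absurd h (hex i)
      · exact ⟨w, rfl⟩
    set u : ZMod Q.n → V := fun i => liftO x₀ (Q.vert i) with hu
    have huval : ∀ i w, Q.vert i = some w → u i = w.1 := by
      intro i w hw
      rw [hu]
      simp only [hw, liftO, Option.elim]
    have hval : ∀ i, (Q.edge i).1 = s(u i, u (i + 1)) := by
      intro i
      obtain ⟨w, hw⟩ := hsome i
      obtain ⟨w', hw'⟩ := hsome (i + 1)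
      have h := Q.inc_edge i
      rw [hw, hw'] at h
      rw [edge_val_of_inc_some_some _ h, huval i w hw, huval _ w' hw']
    have huinj : ∀ i i', u i = u i' → i = i' := by
      intro i i' h
      obtain ⟨w, hw⟩ := hsome i
      obtain ⟨w', hw'⟩ := hsome i'
      apply Q.vert_inj
      rw [hw, hw']
      rw [huval i w hw, huval i' w' hw'] at h
      exact congrArg some (Subtype.ext h)
    rcases Nat.lt_or_ge Q.n 3 with h3 | h3
    · have hn2 : Q.n = 2 := by omega
      have h11 : (1 + 1 : ZMod Q.n) = 0 := by
        have h : ((2 : ℕ) : ZMod Q.n) = ((Q.n : ℕ) : ZMod Q.n) := by rw [hn2]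
        rw [ZMod.natCast_self] at h
        rw [one_add_one_eq_two]
        exact_mod_cast h
      have he : Q.edge 0 = Q.edge 1 := by
        refine Subtype.ext ?_
        rw [hval 0, hval 1, zero_add, h11, Sym2.eq_swap]
      exact absurd (Q.edge_inj he) zero_ne_one
    · apply mk_isCycleOfG Q (fun j => u j) (fun j => (j : ZMod Q.n)) h3 hcast hsurj
      · intro j hj
        show (Q.edge ((j : ZMod Q.n))).1 = s(u (j : ZMod Q.n), u ((j+1 : ℕ) : ZMod Q.n))
        rw [Nat.cast_add_one]
        exact hval _
      · exact fun j k hj hk h => hcast j k hj hk (huinj _ _ h)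
      · show u ((Q.n : ℕ) : ZMod Q.n) = u ((0 : ℕ) : ZMod Q.n)
        rw [ZMod.natCast_self, Nat.cast_zero]
  case pos =>
    obtain ⟨i₀, hi₀⟩ := hex
    have hone : (1 : ZMod Q.n) ≠ 0 := one_ne_zero
    have hvsome : ∀ i, i ≠ i₀ → ∃ w, Q.vert i = some w := by
      intro i hi
      rcases h : Q.vert i with _ | w
      · exact absurd (Q.vert_inj (h.trans hi₀.symm)) hi
      · exact ⟨w, rfl⟩
    have hadd_ne : ∀ j : ℕ, 0 < j → j < Q.n → i₀ + (j : ZMod Q.n) ≠ i₀ := by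
      intro j h0 hj h
      rw [add_eq_left] at h
      have := hcast j 0 hj (by omega) (by rw [h, Nat.cast_zero])
      omega
    have hsub_ne : i₀ - 1 ≠ i₀ := fun h => hone (sub_eq_self.mp h)
    have h1ne : i₀ + 1 ≠ i₀ := fun h => hone (add_eq_left.mp h)
    obtain ⟨w₁, hw₁⟩ := hvsome (i₀ + 1) h1ne
    obtain ⟨a, ha, hea⟩ := edge_val_of_inc_none_some (Q.edge i₀)
      (by rw [Q.inc_edge i₀, hi₀, hw₁])
    obtain ⟨w₂, hw₂⟩ := hvsome (i₀ - 1) hsub_ne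
    obtain ⟨b, hb, heb⟩ := edge_val_of_inc_none_some (Q.edge (i₀ - 1))
      (by rw [Q.inc_edge (i₀ - 1), sub_add_cancel, hi₀, hw₂, Sym2.eq_swap])
    have hcn1 : ((Q.n - 1 : ℕ) : ZMod Q.n) = -1 := by
      refine eq_neg_of_add_eq_zero_left ?_
      rw [← Nat.cast_one (R := ZMod Q.n), ← Nat.cast_add, Nat.sub_add_cancel (by omega)]
      exact ZMod.natCast_self Q.n
    set f : ℕ → V := fun j => if j = 0 then a else if j < Q.n then liftO x₀ (Q.vert (i₀ + j)) else b with hf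
    have hf0 : f 0 = a := by simp [hf]
    have hfn : ∀ j, Q.n ≤ j → f j = b := by
      intro j hj
      show (if j = 0 then a else if j < Q.n then liftO x₀ (Q.vert (i₀ + j)) else b) = b
      rw [if_neg (by omega), if_neg (by omega)]
    have hfmid : ∀ j : ℕ, 0 < j → j < Q.n → ∃ w, Q.vert (i₀ + (j : ZMod Q.n)) = some w ∧ f j = w.1 := by
      intro j h0 hj
      obtain ⟨w, hw⟩ := hvsome _ (hadd_ne j h0 hj)
      refine ⟨w, hw, ?_⟩
      show (if j = 0 then a else if j < Q.n then liftO x₀ (Q.vert (i₀ + j)) else b) = w.1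
      rw [if_neg (by omega), if_pos hj, hw]
      rfl
    have hfe : ∀ j : ℕ, j < Q.n → (Q.edge (i₀ + (j : ZMod Q.n))).1 = s(f j, f (j + 1)) := by
      intro j hj
      rcases Nat.eq_zero_or_pos j with rfl | h0
      · simp only [Nat.cast_zero, add_zero]
        rw [hea, hf0]
        obtain ⟨w, hw, hfw⟩ := hfmid 1 one_pos (by omega)
        rw [Nat.cast_one] at hw
        have hww : w = w₁ := Option.some.inj (hw.symm.trans hw₁)
        rw [hfw, hww]
      · rcases Nat.lt_or_ge (j + 1) Q.n with hj1 | hj1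
        · obtain ⟨w, hw, hfw⟩ := hfmid j h0 hj
          obtain ⟨w', hw', hfw'⟩ := hfmid (j + 1) (by omega) hj1
          have h := Q.inc_edge (i₀ + j)
          have hcs : i₀ + (j : ZMod Q.n) + 1 = i₀ + ((j + 1 : ℕ) : ZMod Q.n) := by
            push_cast
            ring
          rw [hw, hcs, hw'] at h
          rw [edge_val_of_inc_some_some _ h, hfw, hfw']
        · have hj' : j = Q.n - 1 := by omega
          have hcj : i₀ + (j : ZMod Q.n) = i₀ - 1 := by
            rw [hj', hcn1]
            ring
          rw [hcj, heb]
          obtain ⟨w, hw, hfw⟩ := hfmid j h0 hj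
          rw [hcj] at hw
          have hww : w = w₂ := Option.some.inj (hw.symm.trans hw₂)
          rw [hfw, hww, hfn (j + 1) (by omega), Sym2.eq_swap]
    have hfinj : ∀ j k : ℕ, 0 < j → j < Q.n → 0 < k → k < Q.n → f j = f k → j = k := by
      intro j k hj0 hj hk0 hk h
      obtain ⟨w, hw, hfw⟩ := hfmid j hj0 hj
      obtain ⟨w', hw', hfw'⟩ := hfmid k hk0 hk
      rw [hfw, hfw'] at h
      have hv : i₀ + (j : ZMod Q.n) = i₀ + (k : ZMod Q.n) := by
        apply Q.vert_inj
        rw [hw, hw']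
        exact congrArg some (Subtype.ext h)
      exact hcast j k hj hk (add_left_cancel hv)
    have hfab : ∀ j, 0 < j → j < Q.n → f j ≠ x₀ ∧ f j ≠ x₁ ∧ f j ≠ x₂ := by
      intro j h0 hj
      obtain ⟨w, hw, hfw⟩ := hfmid j h0 hj
      rw [hfw]
      exact w.2
    have hEinj : ∀ j k, j < Q.n → k < Q.n → i₀ + (j : ZMod Q.n) = i₀ + (k : ZMod Q.n) → j = k :=
      fun j k hj hk h => hcast j k hj hk (add_left_cancel h)
    have hEsurj : ∀ i : ZMod Q.n, ∃ j, j < Q.n ∧ i₀ + (j : ZMod Q.n) = i := by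
      intro i
      obtain ⟨j, hj, hji⟩ := hsurj (i - i₀)
      exact ⟨j, hj, by rw [hji]; ring⟩
    by_cases hab : a = b
    · exfalso
      apply hQ
      rcases Nat.lt_or_ge Q.n 3 with h3 | h3
      · have hn2 : Q.n = 2 := by omega
        have h11 : (1 + 1 : ZMod Q.n) = 0 := by
          have h : ((2 : ℕ) : ZMod Q.n) = ((Q.n : ℕ) : ZMod Q.n) := by rw [hn2]
          rw [ZMod.natCast_self] at h
          rw [one_add_one_eq_two]
          exact_mod_cast h
        have hm : i₀ - 1 = i₀ + 1 := by
          have hne : (1 : ZMod Q.n) = -1 := eq_neg_of_add_eq_zero_left h11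
          rw [sub_eq_add_neg, ← hne]
        have hww : w₂ = w₁ := by
          rw [← hm] at hw₁
          exact Option.some.inj (hw₂.symm.trans hw₁)
        exact absurd (Q.edge_inj (Subtype.ext (by rw [heb, hea, hww, ← hab]))) hsub_ne
      · apply mk_isCycleOfG Q f (fun j => i₀ + (j : ZMod Q.n)) h3 hEinj hEsurj hfe
        · intro j k hj hk h
          rcases Nat.eq_zero_or_pos j with rfl | hj0
          · rcases Nat.eq_zero_or_pos k with rfl | hk0
            · rfl
            · exfalso
              rw [hf0] at h
              have := (hfab k hk0 hk).2
              rcases ha with rfl | rfl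
              · exact this.1 h.symm
              · exact this.2 h.symm
          · rcases Nat.eq_zero_or_pos k with rfl | hk0
            · exfalso
              rw [hf0] at h
              have := (hfab j hj0 hj).2
              rcases ha with rfl | rfl
              · exact this.1 h
              · exact this.2 h
            · exact hfinj j k hj0 hj hk0 hk h
        · rw [hfn Q.n le_rfl, hf0, hab]
    · refine ⟨a, b, hab, ha, hb, ⟨i₀, hi₀⟩, ⟨?_⟩⟩
      exact
        { f := f
          E := fun j => i₀ + (j : ZMod Q.n)
          Einj := hEinj
          Esurj := hEsurj
          f0 := hf0
          fn := hfn
          fedge := hfe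
          fmem := fun j h0 hj => by
            refine ⟨hfab j h0 hj, ?_⟩
            obtain ⟨w, hw, hfw⟩ := hfmid j h0 hj
            rw [hfw]
            exact ⟨i₀ + (j : ZMod Q.n), hw.trans (contrProj_eq_some.mpr rfl).symm⟩
          finj := hfinj }
end
set_option maxHeartbeats 1000000 in
/-- **Osculating Bicycle Lemma.** Let `G` be a graph and `x₀` a vertex of
degree two with two distinct neighbors `x₁, x₂`, and let `J' = G/x₀` be the
bicontraction of `x₀`.  If `J'` has an osculating bicycle `(Q, Q')` — two cycles
meeting in exactly one vertex and having the same parity — such that neither `Q` nor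
`Q'` is a cycle of `G`, then the union `Q ∪ Q'` corresponds to an `x₀`-isolating even
cycle of `G`: an even cycle `C` of `G` with edge set the union of the edge sets of `Q`
and `Q'`, avoiding `x₀` and containing all neighbors of `x₀`. -/
theorem osculating_bicycle_lemma [DecidableEq V] (G : SimpleGraph V)
    (x₀ x₁ x₂ : V) (h12 : x₁ ≠ x₂) (hnbr : G.neighborSet x₀ = {x₁, x₂})
    (Q Q' : MultiCycle (contrInc G x₀ x₁ x₂))
    (hmeet : ∃! w, w ∈ Set.range Q.vert ∧ w ∈ Set.range Q'.vert)
    (hparity : Even Q.n ↔ Even Q'.n)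
    (hQ : ¬ IsCycleOfG G Q) (hQ' : ¬ IsCycleOfG G Q') :
    ∃ (u : V) (C : G.Walk u u), C.IsCycle ∧ Even C.length ∧
      (∀ e : Sym2 V, e ∈ C.edges ↔ ((∃ i, (Q.edge i).1 = e) ∨ (∃ i, (Q'.edge i).1 = e))) ∧
      x₀ ∉ C.support ∧ (∀ w : V, G.Adj x₀ w → w ∈ C.support) := by
  obtain ⟨a, b, hab, ha, hb, hnQ, ⟨D⟩⟩ := exists_cycData Q hQ
  obtain ⟨a', b', hab', ha', hb', hnQ', ⟨D'₀⟩⟩ := exists_cycData Q' hQ'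
  have hn2 := Q.two_le
  have hn2' := Q'.two_le
  haveI : NeZero Q.n := ⟨by omega⟩
  haveI : NeZero Q'.n := ⟨by omega⟩
  haveI : Fact (1 < Q.n) := ⟨hn2⟩
  haveI : Fact (1 < Q'.n) := ⟨hn2'⟩
  have hcommon : ∀ w, w ∈ Set.range Q.vert → w ∈ Set.range Q'.vert → w = none := by
    obtain ⟨w₀, hw₀, huniq⟩ := hmeet
    intro w h1 h2
    rw [huniq w ⟨h1, h2⟩, ← huniq none ⟨hnQ, hnQ'⟩]
  obtain ⟨D'⟩ : Nonempty (CycData G x₀ x₁ x₂ Q' b a) := by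
    have hset : (a' = b ∧ b' = a) ∨ (a' = a ∧ b' = b) := by
      rcases ha with rfl | rfl <;> rcases hb with rfl | rfl <;>
        rcases ha' with rfl | rfl <;> rcases hb' with rfl | rfl <;> tauto
    rcases hset with ⟨rfl, rfl⟩ | ⟨rfl, rfl⟩
    · exact ⟨D'₀⟩
    · exact ⟨D'₀.rev⟩
  -- adjacency facts about x₀
  have hx1 : G.Adj x₀ x₁ := by
    rw [← SimpleGraph.mem_neighborSet, hnbr]
    exact Set.mem_insert _ _
  have hx2 : G.Adj x₀ x₂ := by
    rw [← SimpleGraph.mem_neighborSet, hnbr]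
    exact Set.mem_insert_iff.mpr (Or.inr rfl)
  have h10 : x₁ ≠ x₀ := hx1.ne'
  have h20 : x₂ ≠ x₀ := hx2.ne'
  set m : ℕ := Q.n + Q'.n with hm
  set F : ℕ → V := fun j => if j < Q.n then D.f j else D'.f (j - Q.n) with hF
  have hF0 : F 0 = a := by
    show (if 0 < Q.n then D.f 0 else D'.f (0 - Q.n)) = a
    rw [if_pos (by omega)]
    exact D.f0
  have hFQ : ∀ j, j < Q.n → F j = D.f j := by
    intro j hj
    show (if j < Q.n then D.f j else D'.f (j - Q.n)) = D.f j
    rw [if_pos hj]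
  have hFQ' : ∀ j, Q.n ≤ j → F j = D'.f (j - Q.n) := by
    intro j hj
    show (if j < Q.n then D.f j else D'.f (j - Q.n)) = D'.f (j - Q.n)
    rw [if_neg (by omega)]
  have hFn : F Q.n = b := by
    rw [hFQ' Q.n le_rfl, Nat.sub_self]
    exact D'.f0
  have hFm : ∀ j, m ≤ j → F j = a := by
    intro j hj
    rw [hFQ' j (by omega)]
    exact D'.fn _ (by omega)
  have hFDn : D.f Q.n = b := D.fn Q.n le_rfl
  -- edge assignment
  set Edg : ℕ → contrEdges G x₀ x₁ x₂ :=
    fun j => if j < Q.n then Q.edge (D.E j) else Q'.edge (D'.E (j - Q.n)) with hEdg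
  have hFe : ∀ j, j < m → (Edg j).1 = s(F j, F (j + 1)) := by
    intro j hj
    by_cases hjn : j < Q.n
    · have : Edg j = Q.edge (D.E j) := by
        show (if j < Q.n then Q.edge (D.E j) else Q'.edge (D'.E (j - Q.n))) = _
        rw [if_pos hjn]
      rw [this, D.fedge j hjn, hFQ j hjn]
      by_cases hj1 : j + 1 < Q.n
      · rw [hFQ (j + 1) hj1]
      · have hj1' : j + 1 = Q.n := by omega
        rw [hj1', hFn, hFDn]
    · have hjn' : Q.n ≤ j := le_of_not_gt hjn
      have : Edg j = Q'.edge (D'.E (j - Q.n)) := by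
        show (if j < Q.n then Q.edge (D.E j) else Q'.edge (D'.E (j - Q.n))) = _
        rw [if_neg hjn]
      rw [this, D'.fedge (j - Q.n) (by omega), hFQ' j hjn', hFQ' (j + 1) (by omega),
        show j + 1 - Q.n = j - Q.n + 1 by omega]
  have hadj : ∀ j, j < m → G.Adj (F j) (F (j + 1)) := by
    intro j hj
    rw [← SimpleGraph.mem_edgeSet, ← hFe j hj]
    exact (Edg j).2.1
  -- vertex membership facts
  have hmemQ : ∀ j, 0 < j → j < Q.n →
      (F j ≠ x₀ ∧ F j ≠ x₁ ∧ F j ≠ x₂) ∧ contrProj x₀ x₁ x₂ (F j) ∈ Set.range Q.vert := by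
    intro j h0 hj
    rw [hFQ j hj]
    exact D.fmem j h0 hj
  have hmemQ' : ∀ j, Q.n < j → j < m →
      (F j ≠ x₀ ∧ F j ≠ x₁ ∧ F j ≠ x₂) ∧ contrProj x₀ x₁ x₂ (F j) ∈ Set.range Q'.vert := by
    intro j h0 hj
    rw [hFQ' j (by omega)]
    exact D'.fmem (j - Q.n) (by omega) (by omega)
  have hnab : ∀ v : V, v ≠ x₀ ∧ v ≠ x₁ ∧ v ≠ x₂ → v ≠ a ∧ v ≠ b := by
    intro v hv
    constructor
    · rcases ha with rfl | rfl
      · exact hv.2.1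
      · exact hv.2.2
    · rcases hb with rfl | rfl
      · exact hv.2.1
      · exact hv.2.2
  have hFinj : ∀ j k, j < m → k < m → F j = F k → j = k := by
    have key : ∀ j k, j < m → k < m → j < k → F j = F k → False := by
      intro j k hj hk hjk h
      rcases Nat.eq_zero_or_pos j with rfl | hj0
      · -- F 0 = a
        rw [hF0] at h
        rcases Nat.lt_trichotomy k Q.n with hkn | hkn | hkn
        · exact ((hnab _ (hmemQ k hjk hkn).1).1 h.symm)
        · rw [hkn, hFn] at h
          exact hab h
        · exact ((hnab _ (hmemQ' k hkn hk).1).1 h.symm)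
      · rcases Nat.lt_trichotomy j Q.n with hjn | hjn | hjn
        · -- j mid Q
          rcases Nat.lt_trichotomy k Q.n with hkn | hkn | hkn
          · have := D.finj j k hj0 hjn (by omega) hkn (by rw [← hFQ j hjn, ← hFQ k hkn, h])
            omega
          · rw [hkn, hFn] at h
            exact (hnab _ (hmemQ j hj0 hjn).1).2 h
          · -- cross
            have h1 := hmemQ j hj0 hjn
            have h2 := hmemQ' k hkn hk
            rw [h] at h1
            have := hcommon _ h1.2 h2.2
            rw [contrProj_eq_none] at this
            tauto
        · -- j = n, F j = b, k > n
          rw [hjn, hFn] at h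
          have hkn : Q.n < k := by omega
          exact (hnab _ (hmemQ' k hkn hk).1).2 h.symm
        · -- both mid Q'
          have hkn : Q.n < k := by omega
          have := D'.finj (j - Q.n) (k - Q.n) (by omega) (by omega) (by omega) (by omega)
            (by rw [← hFQ' j (by omega), ← hFQ' k (by omega), h])
          omega
    intro j k hj hk h
    rcases Nat.lt_trichotomy j k with hlt | heq | hgt
    · exact absurd h (fun h => key j k hj hk hlt h)
    · exact heq
    · exact absurd h.symm (fun h => key k j hk hj hgt h)
  -- cross edges distinct
  have hcrossE : ∀ (i : ZMod Q.n) (i' : ZMod Q'.n), (Q.edge i).1 ≠ (Q'.edge i').1 := by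
    intro i i' h
    have hinc : contrInc G x₀ x₁ x₂ (Q.edge i) = contrInc G x₀ x₁ x₂ (Q'.edge i') := by
      unfold contrInc
      rw [h]
    rw [Q.inc_edge, Q'.inc_edge, Sym2.eq_iff] at hinc
    rcases hinc with ⟨h1, h2⟩ | ⟨h1, h2⟩
    · have e1 : Q.vert i = none := hcommon _ ⟨i, rfl⟩ ⟨i', h1.symm⟩
      have e2 : Q.vert (i + 1) = none := hcommon _ ⟨i + 1, rfl⟩ ⟨i' + 1, h2.symm⟩
      have := Q.vert_inj (e1.trans e2.symm)
      exact one_ne_zero (left_eq_add.mp this)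
    · have e1 : Q.vert i = none := hcommon _ ⟨i, rfl⟩ ⟨i' + 1, h1.symm⟩
      have e2 : Q.vert (i + 1) = none := hcommon _ ⟨i + 1, rfl⟩ ⟨i', h2.symm⟩
      have := Q.vert_inj (e1.trans e2.symm)
      exact one_ne_zero (left_eq_add.mp this)
  have hEdgQ : ∀ j, j < Q.n → Edg j = Q.edge (D.E j) := by
    intro j hj
    show (if j < Q.n then Q.edge (D.E j) else Q'.edge (D'.E (j - Q.n))) = _
    rw [if_pos hj]
  have hEdgQ' : ∀ j, Q.n ≤ j → Edg j = Q'.edge (D'.E (j - Q.n)) := by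
    intro j hj
    show (if j < Q.n then Q.edge (D.E j) else Q'.edge (D'.E (j - Q.n))) = _
    rw [if_neg (by omega)]
  have hmapeq : (List.range m).map (fun j => s(F j, F (j + 1)))
      = (List.range m).map (fun j => (Edg j).1) :=
    List.map_congr_left (fun j hj => (hFe j (List.mem_range.mp hj)).symm)
  have hE : ((List.range m).map fun j => s(F j, F (j + 1))).Nodup := by
    rw [hmapeq]
    refine List.Nodup.map_on ?_ (List.nodup_range)
    intro j hj k hk hjk
    rw [List.mem_range] at hj hk
    by_cases hjn : j < Q.n
    · by_cases hkn : k < Q.n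
      · rw [hEdgQ j hjn, hEdgQ k hkn] at hjk
        exact D.Einj j k hjn hkn (Q.edge_inj (Subtype.ext hjk))
      · rw [hEdgQ j hjn, hEdgQ' k (by omega)] at hjk
        exact absurd hjk (hcrossE _ _)
    · by_cases hkn : k < Q.n
      · rw [hEdgQ' j (by omega), hEdgQ k hkn] at hjk
        exact absurd hjk.symm (hcrossE _ _)
      · rw [hEdgQ' j (by omega), hEdgQ' k (by omega)] at hjk
        have := D'.Einj (j - Q.n) (k - Q.n) (by omega) (by omega)
          (Q'.edge_inj (Subtype.ext hjk))
        omega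
  have hclose : F m = F 0 := by
    rw [hFm m le_rfl, hF0]
  obtain ⟨C, hC, hlen, hedges, hsupp⟩ :=
    walkOfFn_isCycle G F m (by omega) hadj hFinj hE hclose
  refine ⟨F 0, C, hC, ?_, ?_, ?_, ?_⟩
  · rw [hlen]
    exact Nat.even_add.mpr hparity
  · intro e
    rw [hedges, hmapeq, List.mem_map]
    constructor
    · rintro ⟨j, hj, rfl⟩
      rw [List.mem_range] at hj
      by_cases hjn : j < Q.n
      · rw [hEdgQ j hjn]
        exact Or.inl ⟨D.E j, rfl⟩
      · rw [hEdgQ' j (by omega)]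
        exact Or.inr ⟨D'.E (j - Q.n), rfl⟩
    · rintro (⟨i, rfl⟩ | ⟨i, rfl⟩)
      · obtain ⟨j, hj, hji⟩ := D.Esurj i
        exact ⟨j, List.mem_range.mpr (by omega), by rw [hEdgQ j hj, hji]⟩
      · obtain ⟨j, hj, hji⟩ := D'.Esurj i
        refine ⟨Q.n + j, List.mem_range.mpr (by omega), ?_⟩
        rw [hEdgQ' (Q.n + j) (by omega), show Q.n + j - Q.n = j by omega, hji]
  · rw [hsupp]
    intro hmem
    rw [List.mem_map] at hmem
    obtain ⟨j, hj, hFj⟩ := hmem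
    rw [List.mem_range] at hj
    have hax : a ≠ x₀ := by
      rcases ha with rfl | rfl
      · exact h10
      · exact h20
    have hbx : b ≠ x₀ := by
      rcases hb with rfl | rfl
      · exact h10
      · exact h20
    rcases Nat.eq_zero_or_pos j with rfl | hj0
    · rw [hF0] at hFj
      exact hax hFj
    rcases Nat.lt_trichotomy j Q.n with hjn | hjn | hjn
    · exact (hmemQ j hj0 hjn).1.1 hFj
    · rw [hjn, hFn] at hFj
      exact hbx hFj
    · rcases Nat.lt_or_ge j m with hjm | hjm
      · exact (hmemQ' j hjn hjm).1.1 hFj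
      · have : j = m := by omega
        rw [this, hFm m le_rfl] at hFj
        exact hax hFj
  · intro w hw
    rw [← SimpleGraph.mem_neighborSet, hnbr] at hw
    have hwab : w = a ∨ w = b := by
      rcases ha with rfl | rfl <;> rcases hb with rfl | rfl <;>
        rcases hw with rfl | rfl <;> tauto
    rw [hsupp]
    rcases hwab with rfl | rfl
    · exact List.mem_map.mpr ⟨0, List.mem_range.mpr (by omega), hF0⟩
    · exact List.mem_map.mpr ⟨Q.n, List.mem_range.mpr (by omega), hFn⟩
end
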